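/- arXiv:2002.06529 — 7 statements merged into one kernel-verified Lean document; each statement's English description precedes it below -/
import Mathlib

section
/- Let β ≥ 0 and γ ≥ 1, and let (a,b) be a binary pair of length N = 10^β·26^γ obtained by the recursion (a^{(0)},b^{(0)}) = K_{26} and, at each subsequent step, (a^{(j+1)},b^{(j+1)}) = Turyn(K, (a^{(j)},b^{(j)})) where K ∈ {K_{10}, K_{26}}, applying K_{10} exactly β times and K_{26} exactly γ−1 times in any order. Define c_i = b_{N−1−i}, d_i = −a_{N−1−i}, e = a||c, f = b||d (length 2N). Let x_0, x_1, y_0, y_1 be complex numbers of modulus 1 satisfying x_0 − conj(y_1) = 0, x_1 + conj(y_0) = 0, x_0 = x_1, and conj(y_0) = −conj(y_1). Define g = (x_0, e_0, …, e_{2N−1}, y_0) and h = (x_1, f_0, …, f_{2N−1}, y_1) of length 2N+2. Then (g,h) is a (2N+2, 12N/26+1)-CZCP. -/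
/-- Aperiodic cross-correlation at shift `τ` of two length-`L` real sequences
(indexed `0, …, L-1`); it vanishes for `τ ≥ L`. -/
noncomputable def rhoR (L : ℕ) (u v : ℕ → ℝ) (τ : ℕ) : ℝ :=
  ∑ k ∈ Finset.range (L - τ), u k * v (k + τ)

/-- A binary sequence of length `L`: all entries in `{+1, -1}`. -/
def IsBinary (L : ℕ) (u : ℕ → ℝ) : Prop := ∀ i < L, u i = 1 ∨ u i = -1

/-- `(u, v)` is a binary Golay complementary pair (GCP) of length `L`:
both are binary and the autocorrelation sums vanish for `1 ≤ τ ≤ L - 1`. -/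
noncomputable def IsGCP (L : ℕ) (u v : ℕ → ℝ) : Prop :=
  IsBinary L u ∧ IsBinary L v ∧
    ∀ τ : ℕ, 1 ≤ τ → τ ≤ L - 1 → rhoR L u u τ + rhoR L v v τ = 0

/-- `(u, v)` (length-`L` real sequences) is an `(L, Z)`-CZCP:
(C1) the autocorrelation sums vanish for `τ ∈ {1,…,Z} ∪ {L-Z,…,L-1}`, and
(C2) the cross-correlation sums vanish for `τ ∈ {L-Z,…,L-1}`. -/
noncomputable def IsCZCPR (L Z : ℕ) (u v : ℕ → ℝ) : Prop :=
  (∀ τ : ℕ, ((1 ≤ τ ∧ τ ≤ Z) ∨ (L - Z ≤ τ ∧ τ ≤ L - 1)) →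
    rhoR L u u τ + rhoR L v v τ = 0) ∧
  (∀ τ : ℕ, (L - Z ≤ τ ∧ τ ≤ L - 1) → rhoR L u v τ + rhoR L v u τ = 0)

/-- Aperiodic cross-correlation at shift `τ` of two length-`L` complex sequences
(indexed `0, …, L-1`); it vanishes for `τ ≥ L`. -/
noncomputable def rhoC (L : ℕ) (u v : ℕ → ℂ) (τ : ℕ) : ℂ :=
  ∑ k ∈ Finset.range (L - τ), u k * (starRingEnd ℂ) (v (k + τ))

/-- `(u, v)` (length-`L` complex sequences) is an `(L, Z)`-CZCP:
(C1) the autocorrelation sums vanish for `τ ∈ {1,…,Z} ∪ {L-Z,…,L-1}`, and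
(C2) the cross-correlation sums vanish for `τ ∈ {L-Z,…,L-1}`. -/
noncomputable def IsCZCP (L Z : ℕ) (u v : ℕ → ℂ) : Prop :=
  (∀ τ : ℕ, ((1 ≤ τ ∧ τ ≤ Z) ∨ (L - Z ≤ τ ∧ τ ≤ L - 1)) →
    rhoC L u u τ + rhoC L v v τ = 0) ∧
  (∀ τ : ℕ, (L - Z ≤ τ ∧ τ ≤ L - 1) → rhoC L u v τ + rhoC L v u τ = 0)

/-- First sequence of the length-10 Golay kernel `K₁₀`: `(+,+,-,+,-,+,-,-,+,+)`. -/
noncomputable def K10a : ℕ → ℝ := fun i =>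
  (([1, 1, -1, 1, -1, 1, -1, -1, 1, 1] : List ℝ).getD i 0)

/-- Second sequence of the length-10 Golay kernel `K₁₀`: `(+,+,-,+,+,+,+,+,-,-)`. -/
noncomputable def K10b : ℕ → ℝ := fun i =>
  (([1, 1, -1, 1, 1, 1, 1, 1, -1, -1] : List ℝ).getD i 0)

/-- First sequence of the length-26 Golay kernel `K₂₆`. -/
noncomputable def K26a : ℕ → ℝ := fun i =>
  (([1, 1, 1, 1, -1, 1, 1, -1, -1, 1, -1, 1, -1, 1, -1, -1, 1, -1, 1, 1, 1, -1, -1, 1, 1, 1] :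
    List ℝ).getD i 0)

/-- Second sequence of the length-26 Golay kernel `K₂₆`. -/
noncomputable def K26b : ℕ → ℝ := fun i =>
  (([1, 1, 1, 1, -1, 1, 1, -1, -1, 1, -1, 1, 1, 1, 1, 1, -1, 1, -1, -1, -1, 1, 1, -1, -1, -1] :
    List ℝ).getD i 0)

/-- Turyn's construction: given `(p, q)` of length `M` and `(c, d)` of length `K`, the
resulting pair `(e, f)` of length `K·M` is given (at index `kM + j`, i.e. `k = i / M`,
`j = i % M`) by `e_{kM+j} = c_k (p_j + q_j)/2 - d_{K-1-k} (q_j - p_j)/2` and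
`f_{kM+j} = d_k (p_j + q_j)/2 + c_{K-1-k} (q_j - p_j)/2`. -/
noncomputable def turynPair (M K : ℕ) (p q c d : ℕ → ℝ) : (ℕ → ℝ) × (ℕ → ℝ) :=
  (fun i => c (i / M) * (p (i % M) + q (i % M)) / 2
      - d (K - 1 - i / M) * (q (i % M) - p (i % M)) / 2,
   fun i => d (i / M) * (p (i % M) + q (i % M)) / 2
      + c (K - 1 - i / M) * (q (i % M) - p (i % M)) / 2)

open Finset

lemma sum_block (F : ℕ → ℝ) (n M : ℕ) :
    ∑ i ∈ range (n * M), F i = ∑ k ∈ range n, ∑ j ∈ range M, F (k * M + j) := by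
  induction n with
  | zero => simp
  | succ n ih =>
      rw [Nat.succ_mul, Finset.sum_range_add, ih, Finset.sum_range_succ]

lemma divHelper {M : ℕ} (k j : ℕ) (h : j < M) : (k * M + j) / M = k := by
  have hM : 0 < M := by omega
  rw [mul_comm, Nat.mul_add_div hM, Nat.div_eq_of_lt h, add_zero]

lemma modHelper {M : ℕ} (k j : ℕ) (h : j < M) : (k * M + j) % M = j := by
  rw [mul_comm, Nat.mul_add_mod, Nat.mod_eq_of_lt h]

lemma factor4 (n m : ℕ) (A1 A2 A3 A4 B1 B2 B3 B4 : ℕ → ℝ) :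
    ∑ k ∈ range n, ∑ j ∈ range m,
      (A1 k * B1 j + A2 k * B2 j + A3 k * B3 j + A4 k * B4 j)
    = (∑ k ∈ range n, A1 k) * (∑ j ∈ range m, B1 j)
      + (∑ k ∈ range n, A2 k) * (∑ j ∈ range m, B2 j)
      + (∑ k ∈ range n, A3 k) * (∑ j ∈ range m, B3 j)
      + (∑ k ∈ range n, A4 k) * (∑ j ∈ range m, B4 j) := by
  simp only [Finset.sum_add_distrib, ← Finset.mul_sum, ← Finset.sum_mul]

lemma refl_S (c d : ℕ → ℝ) (K w : ℕ) :
    ∑ k ∈ range (K - w),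
      (c (K - 1 - k) * c (K - 1 - (k + w)) + d (K - 1 - k) * d (K - 1 - (k + w)))
    = ∑ k ∈ range (K - w), (c k * c (k + w) + d k * d (k + w)) := by
  conv_rhs => rw [← Finset.sum_range_reflect]
  refine Finset.sum_congr rfl fun k hk => ?_
  rw [Finset.mem_range] at hk
  have e1 : K - w - 1 - k + w = K - 1 - k := by omega
  have e2 : K - w - 1 - k = K - 1 - (k + w) := by omega
  rw [e1, e2]; ring

lemma refl_T1 (c d : ℕ → ℝ) (K w : ℕ) :
    ∑ k ∈ range (K - w),
      (d k * c (K - 1 - (k + w)) - c k * d (K - 1 - (k + w))) = 0 := by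
  have h : ∀ k : ℕ, K - 1 - (k + w) = K - w - 1 - k := by intro k; omega
  simp only [h]
  rw [Finset.sum_sub_distrib]
  have h2 : ∑ k ∈ range (K - w), d k * c (K - w - 1 - k)
      = ∑ k ∈ range (K - w), c k * d (K - w - 1 - k) := by
    conv_lhs => rw [← Finset.sum_range_reflect]
    refine Finset.sum_congr rfl fun k hk => ?_
    rw [Finset.mem_range] at hk
    have e : K - w - 1 - (K - w - 1 - k) = k := by omega
    rw [e]; ring
  rw [h2, sub_self]

lemma refl_T2 (c d : ℕ → ℝ) (K w : ℕ) :
    ∑ k ∈ range (K - w),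
      (c (K - 1 - k) * d (k + w) - d (K - 1 - k) * c (k + w)) = 0 := by
  rw [Finset.sum_sub_distrib]
  have h2 : ∑ k ∈ range (K - w), c (K - 1 - k) * d (k + w)
      = ∑ k ∈ range (K - w), d (K - 1 - k) * c (k + w) := by
    conv_lhs => rw [← Finset.sum_range_reflect]
    refine Finset.sum_congr rfl fun k hk => ?_
    rw [Finset.mem_range] at hk
    have e1 : K - 1 - (K - w - 1 - k) = k + w := by omega
    have e2 : K - w - 1 - k + w = K - 1 - k := by omega
    rw [e1, e2]; ring
  rw [h2, sub_self]

lemma turyn_corr (M K : ℕ) (hM : 0 < M) (p q c d : ℕ → ℝ)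
    (hpq : ∀ v, 1 ≤ v → rhoR M p p v + rhoR M q q v = 0)
    (hcd : ∀ u, 1 ≤ u → rhoR K c c u + rhoR K d d u = 0) :
    ∀ τ, 1 ≤ τ →
      rhoR (K * M) (turynPair M K p q c d).1 (turynPair M K p q c d).1 τ
        + rhoR (K * M) (turynPair M K p q c d).2 (turynPair M K p q c d).2 τ = 0 := by
  intro τ hτ1
  rcases Nat.lt_or_ge τ (K * M) with hτ2 | hτ2
  swap
  · rw [rhoR, rhoR, Nat.sub_eq_zero_of_le hτ2]; simp
  have hu' : τ / M < K := (Nat.div_lt_iff_lt_mul hM).2 hτ2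
  set u := τ / M with hu
  set v := τ % M with hv
  have hv' : v < M := Nat.mod_lt _ hM
  have hτeq : u * M + v = τ := by rw [mul_comm]; exact Nat.div_add_mod τ M
  -- abbreviations
  set e := (turynPair M K p q c d).1 with hedef
  set f := (turynPair M K p q c d).2 with hfdef
  have heval : ∀ i : ℕ, e i = c (i / M) * (p (i % M) + q (i % M)) / 2
      - d (K - 1 - i / M) * (q (i % M) - p (i % M)) / 2 := by
    intro i; rw [hedef]; rfl
  have hfeval : ∀ i : ℕ, f i = d (i / M) * (p (i % M) + q (i % M)) / 2
      + c (K - 1 - i / M) * (q (i % M) - p (i % M)) / 2 := by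
    intro i; rw [hfdef]; rfl
  rw [rhoR, rhoR, ← Finset.sum_add_distrib]
  -- the summand as a function
  have hA1 : ∀ w, 1 ≤ w → ∑ k ∈ range (K - w), (c k * c (k + w) + d k * d (k + w)) = 0 := by
    intro w hw
    have := hcd w hw
    rw [rhoR, rhoR, ← Finset.sum_add_distrib] at this
    exact this
  rcases Nat.eq_zero_or_pos v with hv0 | hv1
  · -- v = 0 : τ = u*M
    have hu1 : 1 ≤ u := by
      rcases Nat.eq_zero_or_pos u with h0 | h1
      · exfalso; rw [h0, zero_mul, zero_add] at hτeq; omega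
      · exact h1
    have hrange : K * M - τ = (K - u) * M := by
      rw [← hτeq, hv0, add_zero, Nat.sub_mul]
    rw [hrange, sum_block]
    have hpoint : ∑ k ∈ range (K - u), ∑ j ∈ range M,
        (e (k * M + j) * e (k * M + j + τ) + f (k * M + j) * f (k * M + j + τ))
        = ∑ k ∈ range (K - u), ∑ j ∈ range M,
          ((c k * c (k + u) + d k * d (k + u)) * ((p j + q j) / 2 * ((p j + q j) / 2))
          + (c (K - 1 - k) * c (K - 1 - (k + u)) + d (K - 1 - k) * d (K - 1 - (k + u)))
              * ((q j - p j) / 2 * ((q j - p j) / 2))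
          + (d k * c (K - 1 - (k + u)) - c k * d (K - 1 - (k + u)))
              * ((p j + q j) / 2 * ((q j - p j) / 2))
          + (c (K - 1 - k) * d (k + u) - d (K - 1 - k) * c (k + u))
              * ((q j - p j) / 2 * ((p j + q j) / 2))) := by
      refine Finset.sum_congr rfl fun k hk => Finset.sum_congr rfl fun j hj => ?_
      rw [Finset.mem_range] at hk hj
      have hi2 : k * M + j + τ = (k + u) * M + j := by rw [← hτeq, hv0]; ring
      rw [hi2, heval, heval, hfeval, hfeval,
        divHelper k j hj, modHelper k j hj, divHelper (k + u) j hj, modHelper (k + u) j hj]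
      ring
    rw [hpoint, factor4, hA1 u hu1, refl_S, hA1 u hu1, refl_T1, refl_T2]
    ring
  · -- v ≥ 1
    obtain ⟨K', hK'⟩ : ∃ K', K = K' + u + 1 := ⟨K - u - 1, by omega⟩
    obtain ⟨M', hM'⟩ : ∃ M', M = M' + v := ⟨M - v, by omega⟩
    have hrange : K * M - τ = K' * M + M' := by
      have hexp : K * M = K' * M + M' + τ := by
        rw [← hτeq, hK', hM']; ring
      omega
    rw [hrange, Finset.sum_range_add, sum_block]
    -- split each full block
    have hsplitblk : ∀ k : ℕ, (∑ j ∈ range M,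
          (e (k * M + j) * e (k * M + j + τ) + f (k * M + j) * f (k * M + j + τ)))
        = (∑ j ∈ range M',
            (e (k * M + j) * e (k * M + j + τ) + f (k * M + j) * f (k * M + j + τ)))
          + ∑ j ∈ range v,
            (e (k * M + (M' + j)) * e (k * M + (M' + j) + τ)
              + f (k * M + (M' + j)) * f (k * M + (M' + j) + τ)) := by
      intro k
      have h := Finset.sum_range_add (fun j =>
        e (k * M + j) * e (k * M + j + τ) + f (k * M + j) * f (k * M + j + τ)) M' v
      rw [← hM'] at h
      exact h
    rw [Finset.sum_congr rfl fun k _ => hsplitblk k, Finset.sum_add_distrib]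
    -- Phi : full-block partial sums (shift u), Psi : wrap-around (shift u+1)
    have hPhi : (∑ k ∈ range (K' + 1), ∑ j ∈ range M',
        (e (k * M + j) * e (k * M + j + τ) + f (k * M + j) * f (k * M + j + τ))) = 0 := by
      have hpoint : ∑ k ∈ range (K' + 1), ∑ j ∈ range M',
          (e (k * M + j) * e (k * M + j + τ) + f (k * M + j) * f (k * M + j + τ))
          = ∑ k ∈ range (K' + 1), ∑ j ∈ range M',
            ((c k * c (k + u) + d k * d (k + u))
                * ((p j + q j) / 2 * ((p (j + v) + q (j + v)) / 2))
            + (c (K - 1 - k) * c (K - 1 - (k + u)) + d (K - 1 - k) * d (K - 1 - (k + u)))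
                * ((q j - p j) / 2 * ((q (j + v) - p (j + v)) / 2))
            + (d k * c (K - 1 - (k + u)) - c k * d (K - 1 - (k + u)))
                * ((p j + q j) / 2 * ((q (j + v) - p (j + v)) / 2))
            + (c (K - 1 - k) * d (k + u) - d (K - 1 - k) * c (k + u))
                * ((q j - p j) / 2 * ((p (j + v) + q (j + v)) / 2))) := by
        refine Finset.sum_congr rfl fun k hk => Finset.sum_congr rfl fun j hj => ?_
        rw [Finset.mem_range] at hk hj
        have hjv : j + v < M := by omega
        have hi2 : k * M + j + τ = (k + u) * M + (j + v) := by rw [← hτeq]; ring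
        rw [hi2, heval, heval, hfeval, hfeval,
          divHelper k j (by omega), modHelper k j (by omega),
          divHelper (k + u) (j + v) hjv, modHelper (k + u) (j + v) hjv]
        ring
      rw [hpoint]
      have hKu : K' + 1 = K - u := by omega
      rw [hKu, factor4, refl_S, refl_T1, refl_T2, zero_mul, zero_mul, add_zero, add_zero,
        ← mul_add]
      rcases Nat.eq_zero_or_pos u with hu0 | hu1
      · -- u = 0 : use kernel GCP at shift v
        have hBsum : (∑ j ∈ range M', (p j + q j) / 2 * ((p (j + v) + q (j + v)) / 2))
            + ∑ j ∈ range M', (q j - p j) / 2 * ((q (j + v) - p (j + v)) / 2) = 0 := by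
          have h := hpq v hv1
          rw [rhoR, rhoR, ← Finset.sum_add_distrib] at h
          have hMv : M - v = M' := by omega
          rw [hMv] at h
          rw [← Finset.sum_add_distrib]
          calc ∑ j ∈ range M', ((p j + q j) / 2 * ((p (j + v) + q (j + v)) / 2)
                + (q j - p j) / 2 * ((q (j + v) - p (j + v)) / 2))
              = ∑ j ∈ range M', ((p j * p (j + v) + q j * q (j + v)) / 2) := by
                refine Finset.sum_congr rfl fun j _ => by ring
            _ = (∑ j ∈ range M', (p j * p (j + v) + q j * q (j + v))) / 2 := by
                rw [Finset.sum_div]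
            _ = 0 := by rw [h]; norm_num
        rw [hBsum, mul_zero]
      · rw [hA1 u hu1, zero_mul]
    have hPsi : (∑ k ∈ range K', ∑ j ∈ range v,
        (e (k * M + (M' + j)) * e (k * M + (M' + j) + τ)
          + f (k * M + (M' + j)) * f (k * M + (M' + j) + τ))) = 0 := by
      have hpoint : ∑ k ∈ range K', ∑ j ∈ range v,
          (e (k * M + (M' + j)) * e (k * M + (M' + j) + τ)
            + f (k * M + (M' + j)) * f (k * M + (M' + j) + τ))
          = ∑ k ∈ range K', ∑ j ∈ range v,
            ((c k * c (k + (u + 1)) + d k * d (k + (u + 1)))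
                * ((p (M' + j) + q (M' + j)) / 2 * ((p j + q j) / 2))
            + (c (K - 1 - k) * c (K - 1 - (k + (u + 1)))
                + d (K - 1 - k) * d (K - 1 - (k + (u + 1))))
                * ((q (M' + j) - p (M' + j)) / 2 * ((q j - p j) / 2))
            + (d k * c (K - 1 - (k + (u + 1))) - c k * d (K - 1 - (k + (u + 1))))
                * ((p (M' + j) + q (M' + j)) / 2 * ((q j - p j) / 2))
            + (c (K - 1 - k) * d (k + (u + 1)) - d (K - 1 - k) * c (k + (u + 1)))
                * ((q (M' + j) - p (M' + j)) / 2 * ((p j + q j) / 2))) := by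
        refine Finset.sum_congr rfl fun k hk => Finset.sum_congr rfl fun j hj => ?_
        rw [Finset.mem_range] at hk hj
        have hMj : M' + j < M := by omega
        have hi2 : k * M + (M' + j) + τ = (k + (u + 1)) * M + j := by
          rw [← hτeq, hM']; ring
        rw [hi2, heval, heval, hfeval, hfeval,
          divHelper k (M' + j) hMj, modHelper k (M' + j) hMj,
          divHelper (k + (u + 1)) j (by omega), modHelper (k + (u + 1)) j (by omega)]
        ring
      rw [hpoint]
      have hKu : K' = K - (u + 1) := by rw [hK']; omega
      rw [hKu, factor4, refl_S, refl_T1, refl_T2, hA1 (u + 1) (Nat.le_add_left 1 u)]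
      ring
    have hPhi' := hPhi
    rw [Finset.sum_range_succ] at hPhi'
    linarith [hPsi, hPhi']

lemma turyn_inv (M K t : ℕ) (hM : 0 < M) (ht : t ≤ K) (p q c d : ℕ → ℝ)
    (hpre : ∀ k < t, c k = d k)
    (hsuf : ∀ k, K - t ≤ k → k < K → c k = -d k) :
    (∀ i < t * M, (turynPair M K p q c d).1 i = (turynPair M K p q c d).2 i) ∧
    (∀ i, K * M - t * M ≤ i → i < K * M →
      (turynPair M K p q c d).1 i = -(turynPair M K p q c d).2 i) := by
  constructor
  · intro i hi
    have hk : i / M < t := by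
      rw [Nat.div_lt_iff_lt_mul hM]; exact hi
    show c (i / M) * (p (i % M) + q (i % M)) / 2
        - d (K - 1 - i / M) * (q (i % M) - p (i % M)) / 2
      = d (i / M) * (p (i % M) + q (i % M)) / 2
        + c (K - 1 - i / M) * (q (i % M) - p (i % M)) / 2
    revert hk
    generalize i / M = m
    intro hk
    have h1 : c m = d m := hpre _ hk
    have h2 : c (K - 1 - m) = -d (K - 1 - m) := hsuf _ (by omega) (by omega)
    rw [h1, h2]; ring
  · intro i hi1 hi2
    have hk1 : K - t ≤ i / M := by
      rw [Nat.le_div_iff_mul_le hM]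
      have : (K - t) * M = K * M - t * M := by rw [Nat.sub_mul]
      omega
    have hk2 : i / M < K := by rw [Nat.div_lt_iff_lt_mul hM]; exact hi2
    show c (i / M) * (p (i % M) + q (i % M)) / 2
        - d (K - 1 - i / M) * (q (i % M) - p (i % M)) / 2
      = -(d (i / M) * (p (i % M) + q (i % M)) / 2
        + c (K - 1 - i / M) * (q (i % M) - p (i % M)) / 2)
    revert hk1 hk2
    generalize i / M = m
    intro hk1 hk2
    have h1 : c m = -d m := hsuf _ hk1 hk2
    have h2 : c (K - 1 - m) = d (K - 1 - m) := hpre _ (by omega)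
    rw [h1, h2]; ring

lemma concat_corr (N : ℕ) (hN : 0 < N) (a b e f : ℕ → ℝ)
    (he : ∀ i, e i = if i < N then a i else b (N - 1 - (i - N)))
    (hf : ∀ i, f i = if i < N then b i else -a (N - 1 - (i - N)))
    (hab : ∀ τ, 1 ≤ τ → rhoR N a a τ + rhoR N b b τ = 0) :
    ∀ τ, 1 ≤ τ → rhoR (2 * N) e e τ + rhoR (2 * N) f f τ = 0 := by
  intro τ hτ1
  rw [rhoR, rhoR, ← Finset.sum_add_distrib]
  rcases Nat.lt_or_ge τ N with hτN | hτN
  · -- 1 ≤ τ ≤ N-1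
    rw [show 2 * N - τ = (N - τ) + (τ + (N - τ)) from by omega,
      Finset.sum_range_add, Finset.sum_range_add]
    have hpart1 : ∑ i ∈ Finset.range (N - τ), (e i * e (i + τ) + f i * f (i + τ))
        = ∑ i ∈ Finset.range (N - τ), (a i * a (i + τ) + b i * b (i + τ)) := by
      refine Finset.sum_congr rfl fun i hi => ?_
      rw [Finset.mem_range] at hi
      rw [he, he, hf, hf, if_pos (by omega), if_pos (by omega),
        if_pos (by omega), if_pos (by omega)]
    have hpart1' : ∑ i ∈ Finset.range (N - τ), (a i * a (i + τ) + b i * b (i + τ)) = 0 := by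
      have := hab τ hτ1
      rw [rhoR, rhoR, ← Finset.sum_add_distrib] at this
      exact this
    have hpart2 : ∑ i ∈ Finset.range τ, (e (N - τ + i) * e (N - τ + i + τ)
          + f (N - τ + i) * f (N - τ + i + τ))
        = ∑ i ∈ Finset.range τ, (a (N - τ + i) * b (N - 1 - i)
          - b (N - τ + i) * a (N - 1 - i)) := by
      refine Finset.sum_congr rfl fun i hi => ?_
      rw [Finset.mem_range] at hi
      rw [he, he, hf, hf, if_pos (show N - τ + i < N from by omega),
        if_neg (show ¬ N - τ + i + τ < N from by omega),
        if_pos (show N - τ + i < N from by omega),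
        if_neg (show ¬ N - τ + i + τ < N from by omega),
        show N - 1 - (N - τ + i + τ - N) = N - 1 - i from by omega]
      ring
    have hpart2' : ∑ i ∈ Finset.range τ, (a (N - τ + i) * b (N - 1 - i)
        - b (N - τ + i) * a (N - 1 - i)) = 0 := by
      rw [Finset.sum_sub_distrib]
      have : ∑ i ∈ Finset.range τ, a (N - τ + i) * b (N - 1 - i)
          = ∑ i ∈ Finset.range τ, b (N - τ + i) * a (N - 1 - i) := by
        conv_lhs => rw [← Finset.sum_range_reflect]
        refine Finset.sum_congr rfl fun i hi => ?_
        rw [Finset.mem_range] at hi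
        rw [show N - τ + (τ - 1 - i) = N - 1 - i from by omega,
          show N - 1 - (τ - 1 - i) = N - τ + i from by omega]
        ring
      rw [this, sub_self]
    have hpart3 : ∑ i ∈ Finset.range (N - τ), (e (N - τ + (τ + i)) * e (N - τ + (τ + i) + τ)
          + f (N - τ + (τ + i)) * f (N - τ + (τ + i) + τ))
        = ∑ i ∈ Finset.range (N - τ), (b (N - 1 - i) * b (N - 1 - i - τ)
          + a (N - 1 - i) * a (N - 1 - i - τ)) := by
      refine Finset.sum_congr rfl fun i hi => ?_
      rw [Finset.mem_range] at hi
      rw [he, he, hf, hf, if_neg (by omega), if_neg (by omega),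
        if_neg (by omega), if_neg (by omega),
        show N - 1 - (N - τ + (τ + i) - N) = N - 1 - i from by omega,
        show N - 1 - (N - τ + (τ + i) + τ - N) = N - 1 - i - τ from by omega]
      ring
    have hpart3' : ∑ i ∈ Finset.range (N - τ), (b (N - 1 - i) * b (N - 1 - i - τ)
        + a (N - 1 - i) * a (N - 1 - i - τ)) = 0 := by
      have h0 : ∑ i ∈ Finset.range (N - τ), (b (N - 1 - i) * b (N - 1 - i - τ)
          + a (N - 1 - i) * a (N - 1 - i - τ))
          = ∑ i ∈ Finset.range (N - τ), (a i * a (i + τ) + b i * b (i + τ)) := by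
        conv_lhs => rw [← Finset.sum_range_reflect]
        refine Finset.sum_congr rfl fun i hi => ?_
        rw [Finset.mem_range] at hi
        rw [show N - 1 - (N - τ - 1 - i) - τ = i from by omega,
          show N - 1 - (N - τ - 1 - i) = i + τ from by omega]
        ring
      rw [h0, hpart1']
    rw [hpart1, hpart1', hpart2, hpart2', hpart3, hpart3']
    ring
  · rcases Nat.lt_or_ge τ (2 * N) with hτ2 | hτ2
    · -- N ≤ τ ≤ 2N-1 : pure cross part
      have hcross : ∑ i ∈ Finset.range (2 * N - τ), (e i * e (i + τ) + f i * f (i + τ))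
          = ∑ i ∈ Finset.range (2 * N - τ),
            (a i * b (2 * N - 1 - τ - i) - b i * a (2 * N - 1 - τ - i)) := by
        refine Finset.sum_congr rfl fun i hi => ?_
        rw [Finset.mem_range] at hi
        rw [he, he, hf, hf, if_pos (show i < N from by omega),
          if_neg (show ¬ i + τ < N from by omega),
          if_pos (show i < N from by omega),
          if_neg (show ¬ i + τ < N from by omega),
          show N - 1 - (i + τ - N) = 2 * N - 1 - τ - i from by omega]
        ring
      rw [hcross, Finset.sum_sub_distrib]
      have : ∑ i ∈ Finset.range (2 * N - τ), a i * b (2 * N - 1 - τ - i)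
          = ∑ i ∈ Finset.range (2 * N - τ), b i * a (2 * N - 1 - τ - i) := by
        conv_lhs => rw [← Finset.sum_range_reflect]
        refine Finset.sum_congr rfl fun i hi => ?_
        rw [Finset.mem_range] at hi
        rw [show 2 * N - 1 - τ - (2 * N - τ - 1 - i) = i from by omega,
          show 2 * N - τ - 1 - i = 2 * N - 1 - τ - i from by omega]
        ring
      rw [this, sub_self]
    · rw [Nat.sub_eq_zero_of_le hτ2]; simp

lemma assemble (N t : ℕ) (hN : 26 ≤ N) (h13 : 13 * t = 6 * N)
    (a b e f : ℕ → ℝ)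
    (he : ∀ i, e i = if i < N then a i else b (N - 1 - (i - N)))
    (hf : ∀ i, f i = if i < N then b i else -a (N - 1 - (i - N)))
    (hpre : ∀ i < t, a i = b i)
    (hEF : ∀ τ, 1 ≤ τ → rhoR (2 * N) e e τ + rhoR (2 * N) f f τ = 0)
    (x0 x1 y0 y1 : ℂ)
    (cc1 : x0 - (starRingEnd ℂ) y1 = 0) (cc2 : x1 + (starRingEnd ℂ) y0 = 0)
    (cc3 : x0 = x1) (cc4 : (starRingEnd ℂ) y0 = -(starRingEnd ℂ) y1)
    (g h : ℕ → ℂ)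
    (hg : ∀ i, g i = if i = 0 then x0 else if i ≤ 2 * N then ((e (i - 1) : ℝ) : ℂ) else y0)
    (hh : ∀ i, h i = if i = 0 then x1 else if i ≤ 2 * N then ((f (i - 1) : ℝ) : ℂ) else y1) :
    IsCZCP (2 * N + 2) (t + 1) g h := by
  have ht1 : 12 ≤ t := by omega
  have ht2 : t + 1 < N := by omega
  -- boundary values
  have hg0 : g 0 = x0 := by rw [hg]; simp
  have hh0 : h 0 = x1 := by rw [hh]; simp
  have hgtop : g (2 * N + 1) = y0 := by
    rw [hg, if_neg (by omega), if_neg (by omega)]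
  have hhtop : h (2 * N + 1) = y1 := by
    rw [hh, if_neg (by omega), if_neg (by omega)]
  have hgmid : ∀ i, 1 ≤ i → i ≤ 2 * N → g i = ((e (i - 1) : ℝ) : ℂ) := by
    intro i h1 h2; rw [hg, if_neg (by omega), if_pos h2]
  have hhmid : ∀ i, 1 ≤ i → i ≤ 2 * N → h i = ((f (i - 1) : ℝ) : ℂ) := by
    intro i h1 h2; rw [hh, if_neg (by omega), if_pos h2]
  -- the sum-splitting identity
  have hsplit : ∀ (u v : ℕ → ℂ) (τ : ℕ), 1 ≤ τ → τ ≤ 2 * N →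
      rhoC (2 * N + 2) u v τ =
        u 0 * (starRingEnd ℂ) (v τ)
        + (∑ i ∈ Finset.range (2 * N - τ), u (i + 1) * (starRingEnd ℂ) (v (i + 1 + τ)))
        + u (2 * N + 1 - τ) * (starRingEnd ℂ) (v (2 * N + 1)) := by
    intro u v τ h1 h2
    rw [rhoC, show 2 * N + 2 - τ = (2 * N - τ) + 1 + 1 from by omega,
      Finset.sum_range_succ, Finset.sum_range_succ',
      show 2 * N - τ + 1 = 2 * N + 1 - τ from by omega,
      show 2 * N + 1 - τ + τ = 2 * N + 1 from by omega, zero_add]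
    ring
  -- values of e, f at relevant places
  have heA : ∀ i, i < N → e i = a i := fun i hi => by rw [he, if_pos hi]
  have hfB : ∀ i, i < N → f i = b i := fun i hi => by rw [hf, if_pos hi]
  have heB : ∀ i, N ≤ i → i < 2 * N → e i = b (2 * N - 1 - i) := by
    intro i h1 h2
    rw [he, if_neg (by omega), show N - 1 - (i - N) = 2 * N - 1 - i from by omega]
  have hfA : ∀ i, N ≤ i → i < 2 * N → f i = -a (2 * N - 1 - i) := by
    intro i h1 h2
    rw [hf, if_neg (by omega), show N - 1 - (i - N) = 2 * N - 1 - i from by omega]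
  constructor
  · -- C1
    intro τ hτ
    rcases eq_or_lt_of_le (show τ ≤ 2 * N + 1 from by omega) with htop | hmidτ
    · -- τ = 2N+1
      rw [rhoC, rhoC, htop, show 2 * N + 2 - (2 * N + 1) = 1 from by omega,
        Finset.sum_range_one, Finset.sum_range_one, zero_add, hg0, hh0, hgtop, hhtop]
      linear_combination x0 * cc4 - (starRingEnd ℂ) y1 * cc3
    · have hτ1 : 1 ≤ τ := by omega
      have hτ2 : τ ≤ 2 * N := by omega
      rw [hsplit g g τ hτ1 hτ2, hsplit h h τ hτ1 hτ2, hg0, hh0, hgtop, hhtop,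
        hgmid τ hτ1 hτ2, hhmid τ hτ1 hτ2,
        hgmid (2 * N + 1 - τ) (by omega) (by omega),
        hhmid (2 * N + 1 - τ) (by omega) (by omega),
        show 2 * N + 1 - τ - 1 = 2 * N - τ from by omega]
      have hm : (∑ i ∈ Finset.range (2 * N - τ), g (i + 1) * (starRingEnd ℂ) (g (i + 1 + τ)))
          + (∑ i ∈ Finset.range (2 * N - τ), h (i + 1) * (starRingEnd ℂ) (h (i + 1 + τ)))
          = 0 := by
        rw [← Finset.sum_add_distrib]
        have hcong : ∀ i ∈ Finset.range (2 * N - τ),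
            g (i + 1) * (starRingEnd ℂ) (g (i + 1 + τ))
              + h (i + 1) * (starRingEnd ℂ) (h (i + 1 + τ))
            = ((e i * e (i + τ) + f i * f (i + τ) : ℝ) : ℂ) := by
          intro i hi
          rw [Finset.mem_range] at hi
          rw [hgmid (i + 1) (by omega) (by omega), hgmid (i + 1 + τ) (by omega) (by omega),
            hhmid (i + 1) (by omega) (by omega), hhmid (i + 1 + τ) (by omega) (by omega),
            show i + 1 - 1 = i from by omega, show i + 1 + τ - 1 = i + τ from by omega,
            Complex.conj_ofReal, Complex.conj_ofReal]
          push_cast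
          ring
        rw [Finset.sum_congr rfl hcong, ← Complex.ofReal_sum]
        have h0 : ∑ i ∈ Finset.range (2 * N - τ), (e i * e (i + τ) + f i * f (i + τ)) = 0 := by
          have := hEF τ hτ1
          rw [rhoR, rhoR, ← Finset.sum_add_distrib] at this
          exact this
        rw [h0, Complex.ofReal_zero]
      rw [Complex.conj_ofReal, Complex.conj_ofReal]
      -- now case on which range τ is in
      rcases hτ with ⟨_, hsm⟩ | ⟨hlg, _⟩
      · -- 1 ≤ τ ≤ t+1
        rw [heA (τ - 1) (by omega), hfB (τ - 1) (by omega),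
          heB (2 * N - τ) (by omega) (by omega), hfA (2 * N - τ) (by omega) (by omega),
          show 2 * N - 1 - (2 * N - τ) = τ - 1 from by omega]
        push_cast
        linear_combination hm + (a (τ - 1) : ℂ) * cc1 + (b (τ - 1) : ℂ) * cc2
      · -- 2N+1-t ≤ τ ≤ 2N
        have hlg' : 2 * N + 1 - t ≤ τ := by omega
        rw [heB (τ - 1) (by omega) (by omega), hfA (τ - 1) (by omega) (by omega),
          show 2 * N - 1 - (τ - 1) = 2 * N - τ from by omega,
          heA (2 * N - τ) (by omega), hfB (2 * N - τ) (by omega),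
          hpre (2 * N - τ) (by omega)]
        push_cast
        linear_combination hm + (b (2 * N - τ) : ℂ) * cc3 + (b (2 * N - τ) : ℂ) * cc4
  · -- C2
    intro τ ⟨hlg, hτub⟩
    have hlg' : 2 * N + 1 - t ≤ τ := by omega
    rcases eq_or_lt_of_le (show τ ≤ 2 * N + 1 from by omega) with htop | hmidτ
    · rw [rhoC, rhoC, htop, show 2 * N + 2 - (2 * N + 1) = 1 from by omega,
        Finset.sum_range_one, Finset.sum_range_one, zero_add, hg0, hh0, hgtop, hhtop]
      linear_combination (starRingEnd ℂ) y1 * cc3 + x1 * cc4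
    · have hτ1 : 1 ≤ τ := by omega
      have hτ2 : τ ≤ 2 * N := by omega
      rw [hsplit g h τ hτ1 hτ2, hsplit h g τ hτ1 hτ2, hg0, hh0, hgtop, hhtop,
        hgmid τ hτ1 hτ2, hhmid τ hτ1 hτ2,
        hgmid (2 * N + 1 - τ) (by omega) (by omega),
        hhmid (2 * N + 1 - τ) (by omega) (by omega),
        show 2 * N + 1 - τ - 1 = 2 * N - τ from by omega]
      have hm : (∑ i ∈ Finset.range (2 * N - τ), g (i + 1) * (starRingEnd ℂ) (h (i + 1 + τ)))
          + (∑ i ∈ Finset.range (2 * N - τ), h (i + 1) * (starRingEnd ℂ) (g (i + 1 + τ)))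
          = 0 := by
        rw [← Finset.sum_add_distrib]
        apply Finset.sum_eq_zero
        intro i hi
        rw [Finset.mem_range] at hi
        rw [hgmid (i + 1) (by omega) (by omega), hgmid (i + 1 + τ) (by omega) (by omega),
          hhmid (i + 1) (by omega) (by omega), hhmid (i + 1 + τ) (by omega) (by omega),
          show i + 1 - 1 = i from by omega, show i + 1 + τ - 1 = i + τ from by omega,
          Complex.conj_ofReal, Complex.conj_ofReal,
          heA i (by omega), hfB i (by omega),
          heB (i + τ) (by omega) (by omega), hfA (i + τ) (by omega) (by omega),
          hpre i (by omega), hpre (2 * N - 1 - (i + τ)) (by omega)]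
        push_cast
        ring
      rw [Complex.conj_ofReal, Complex.conj_ofReal,
        heB (τ - 1) (by omega) (by omega), hfA (τ - 1) (by omega) (by omega),
        show 2 * N - 1 - (τ - 1) = 2 * N - τ from by omega,
        heA (2 * N - τ) (by omega), hfB (2 * N - τ) (by omega)]
      push_cast
      linear_combination hm - (a (2 * N - τ) : ℂ) * cc1 + (b (2 * N - τ) : ℂ) * cc2

lemma hXA0 : K10a 0 = 1 := rfl
lemma hXA1 : K10a 1 = 1 := rfl
lemma hXA2 : K10a 2 = (-1) := rfl
lemma hXA3 : K10a 3 = 1 := rfl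
lemma hXA4 : K10a 4 = (-1) := rfl
lemma hXA5 : K10a 5 = 1 := rfl
lemma hXA6 : K10a 6 = (-1) := rfl
lemma hXA7 : K10a 7 = (-1) := rfl
lemma hXA8 : K10a 8 = 1 := rfl
lemma hXA9 : K10a 9 = 1 := rfl
lemma hXB0 : K10b 0 = 1 := rfl
lemma hXB1 : K10b 1 = 1 := rfl
lemma hXB2 : K10b 2 = (-1) := rfl
lemma hXB3 : K10b 3 = 1 := rfl
lemma hXB4 : K10b 4 = 1 := rfl
lemma hXB5 : K10b 5 = 1 := rfl
lemma hXB6 : K10b 6 = 1 := rfl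
lemma hXB7 : K10b 7 = 1 := rfl
lemma hXB8 : K10b 8 = (-1) := rfl
lemma hXB9 : K10b 9 = (-1) := rfl
lemma hYA0 : K26a 0 = 1 := rfl
lemma hYA1 : K26a 1 = 1 := rfl
lemma hYA2 : K26a 2 = 1 := rfl
lemma hYA3 : K26a 3 = 1 := rfl
lemma hYA4 : K26a 4 = (-1) := rfl
lemma hYA5 : K26a 5 = 1 := rfl
lemma hYA6 : K26a 6 = 1 := rfl
lemma hYA7 : K26a 7 = (-1) := rfl
lemma hYA8 : K26a 8 = (-1) := rfl
lemma hYA9 : K26a 9 = 1 := rfl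
lemma hYA10 : K26a 10 = (-1) := rfl
lemma hYA11 : K26a 11 = 1 := rfl
lemma hYA12 : K26a 12 = (-1) := rfl
lemma hYA13 : K26a 13 = 1 := rfl
lemma hYA14 : K26a 14 = (-1) := rfl
lemma hYA15 : K26a 15 = (-1) := rfl
lemma hYA16 : K26a 16 = 1 := rfl
lemma hYA17 : K26a 17 = (-1) := rfl
lemma hYA18 : K26a 18 = 1 := rfl
lemma hYA19 : K26a 19 = 1 := rfl
lemma hYA20 : K26a 20 = 1 := rfl
lemma hYA21 : K26a 21 = (-1) := rfl
lemma hYA22 : K26a 22 = (-1) := rfl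
lemma hYA23 : K26a 23 = 1 := rfl
lemma hYA24 : K26a 24 = 1 := rfl
lemma hYA25 : K26a 25 = 1 := rfl
lemma hYB0 : K26b 0 = 1 := rfl
lemma hYB1 : K26b 1 = 1 := rfl
lemma hYB2 : K26b 2 = 1 := rfl
lemma hYB3 : K26b 3 = 1 := rfl
lemma hYB4 : K26b 4 = (-1) := rfl
lemma hYB5 : K26b 5 = 1 := rfl
lemma hYB6 : K26b 6 = 1 := rfl
lemma hYB7 : K26b 7 = (-1) := rfl
lemma hYB8 : K26b 8 = (-1) := rfl
lemma hYB9 : K26b 9 = 1 := rfl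
lemma hYB10 : K26b 10 = (-1) := rfl
lemma hYB11 : K26b 11 = 1 := rfl
lemma hYB12 : K26b 12 = 1 := rfl
lemma hYB13 : K26b 13 = 1 := rfl
lemma hYB14 : K26b 14 = 1 := rfl
lemma hYB15 : K26b 15 = 1 := rfl
lemma hYB16 : K26b 16 = (-1) := rfl
lemma hYB17 : K26b 17 = 1 := rfl
lemma hYB18 : K26b 18 = (-1) := rfl
lemma hYB19 : K26b 19 = (-1) := rfl
lemma hYB20 : K26b 20 = (-1) := rfl
lemma hYB21 : K26b 21 = 1 := rfl
lemma hYB22 : K26b 22 = 1 := rfl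
lemma hYB23 : K26b 23 = (-1) := rfl
lemma hYB24 : K26b 24 = (-1) := rfl
lemma hYB25 : K26b 25 = (-1) := rfl

lemma hK10gcp : ∀ τ, 1 ≤ τ → rhoR 10 K10a K10a τ + rhoR 10 K10b K10b τ = 0 := by
  intro τ h1
  rcases Nat.lt_or_ge τ 10 with h | h
  · interval_cases τ <;>
      · simp only [rhoR, Finset.sum_range_succ, Finset.sum_range_zero]
        norm_num [hXA0,hXA1,hXA2,hXA3,hXA4,hXA5,hXA6,hXA7,hXA8,hXA9,hXB0,hXB1,hXB2,hXB3,hXB4,hXB5,hXB6,hXB7,hXB8,hXB9]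
  · rw [rhoR, rhoR, Nat.sub_eq_zero_of_le h]; simp

lemma hK26gcp : ∀ τ, 1 ≤ τ → rhoR 26 K26a K26a τ + rhoR 26 K26b K26b τ = 0 := by
  intro τ h1
  rcases Nat.lt_or_ge τ 26 with h | h
  · interval_cases τ <;>
      · simp only [rhoR, Finset.sum_range_succ, Finset.sum_range_zero]
        norm_num [hYA0,hYA1,hYA2,hYA3,hYA4,hYA5,hYA6,hYA7,hYA8,hYA9,hYA10,hYA11,hYA12,hYA13,hYA14,hYA15,hYA16,hYA17,hYA18,hYA19,hYA20,hYA21,hYA22,hYA23,hYA24,hYA25,hYB0,hYB1,hYB2,hYB3,hYB4,hYB5,hYB6,hYB7,hYB8,hYB9,hYB10,hYB11,hYB12,hYB13,hYB14,hYB15,hYB16,hYB17,hYB18,hYB19,hYB20,hYB21,hYB22,hYB23,hYB24,hYB25]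
  · rw [rhoR, rhoR, Nat.sub_eq_zero_of_le h]; simp

lemma hK26pre : ∀ i < 12, K26a i = K26b i := by
  intro i hi
  interval_cases i <;> norm_num [hYA0,hYA1,hYA2,hYA3,hYA4,hYA5,hYA6,hYA7,hYA8,hYA9,hYA10,hYA11,hYA12,hYA13,hYA14,hYA15,hYA16,hYA17,hYA18,hYA19,hYA20,hYA21,hYA22,hYA23,hYA24,hYA25,hYB0,hYB1,hYB2,hYB3,hYB4,hYB5,hYB6,hYB7,hYB8,hYB9,hYB10,hYB11,hYB12,hYB13,hYB14,hYB15,hYB16,hYB17,hYB18,hYB19,hYB20,hYB21,hYB22,hYB23,hYB24,hYB25]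

lemma hK26suf : ∀ i, 26 - 12 ≤ i → i < 26 → K26a i = -K26b i := by
  intro i h1 h2
  interval_cases i <;> norm_num [hYA0,hYA1,hYA2,hYA3,hYA4,hYA5,hYA6,hYA7,hYA8,hYA9,hYA10,hYA11,hYA12,hYA13,hYA14,hYA15,hYA16,hYA17,hYA18,hYA19,hYA20,hYA21,hYA22,hYA23,hYA24,hYA25,hYB0,hYB1,hYB2,hYB3,hYB4,hYB5,hYB6,hYB7,hYB8,hYB9,hYB10,hYB11,hYB12,hYB13,hYB14,hYB15,hYB16,hYB17,hYB18,hYB19,hYB20,hYB21,hYB22,hYB23,hYB24,hYB25]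


/-- Theorem 3 of the paper, case `N = 10^β·26^γ`: let `(a, b)` be a binary
GCP of length `N = 10^β·26^γ` (`β ≥ 0`, `γ ≥ 1`) obtained by the recursion starting from
`K₂₆` and applying Turyn's construction with kernel `K₁₀` exactly `β` times and with
kernel `K₂₆` exactly `γ - 1` times, in any order (encoded by `choice : ℕ → Bool`, where
`true` means "apply `K₁₀`", with intermediate lengths tracked by `Len`).  Put
`c_i = b_{N-1-i}`, `d_i = -a_{N-1-i}`, `e = a‖c`, `f = b‖d` (length `2N`), and let
`x₀, x₁, y₀, y₁` be unimodular complex numbers with `x₀ - conj y₁ = 0`,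
`x₁ + conj y₀ = 0`, `x₀ = x₁`, `conj y₀ = -conj y₁`.  Then
`g = (x₀, e₀, …, e_{2N-1}, y₀)` and `h = (x₁, f₀, …, f_{2N-1}, y₁)` form a
`(2N+2, 12N/26+1)`-CZCP. -/
theorem stmt_9 (β γ : ℕ) (hγ : 1 ≤ γ)
    (choice : ℕ → Bool)
    (hcount : ((Finset.range (β + (γ - 1))).filter fun j => choice j = true).card = β)
    (Len : ℕ → ℕ) (hLen0 : Len 0 = 26)
    (hLenRec : ∀ j < β + (γ - 1), Len (j + 1) = (if choice j then 10 else 26) * Len j)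
    (P : ℕ → (ℕ → ℝ) × (ℕ → ℝ))
    (hP0 : P 0 = (K26a, K26b))
    (hPrec : ∀ j < β + (γ - 1),
      P (j + 1) = if choice j then turynPair 10 (Len j) K10a K10b (P j).1 (P j).2
                  else turynPair 26 (Len j) K26a K26b (P j).1 (P j).2)
    (N : ℕ) (hN : N = 10 ^ β * 26 ^ γ) (hNLen : Len (β + (γ - 1)) = N)
    (a b : ℕ → ℝ) (ha : a = (P (β + (γ - 1))).1) (hb : b = (P (β + (γ - 1))).2)
    (e f : ℕ → ℝ)
    (he : ∀ i, e i = if i < N then a i else b (N - 1 - (i - N)))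
    (hf : ∀ i, f i = if i < N then b i else -a (N - 1 - (i - N)))
    (x0 x1 y0 y1 : ℂ)
    (hx0 : ‖x0‖ = 1) (hx1 : ‖x1‖ = 1)
    (hy0 : ‖y0‖ = 1) (hy1 : ‖y1‖ = 1)
    (cc1 : x0 - (starRingEnd ℂ) y1 = 0) (cc2 : x1 + (starRingEnd ℂ) y0 = 0)
    (cc3 : x0 = x1) (cc4 : (starRingEnd ℂ) y0 = -(starRingEnd ℂ) y1)
    (g h : ℕ → ℂ)
    (hg : ∀ i, g i = if i = 0 then x0 else if i ≤ 2 * N then ((e (i - 1) : ℝ) : ℂ) else y0)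
    (hh : ∀ i, h i = if i = 0 then x1 else if i ≤ 2 * N then ((f (i - 1) : ℝ) : ℂ) else y1) :
    IsCZCP (2 * N + 2) (12 * N / 26 + 1) g h := by
  -- main induction along the recursion
  have main : ∀ j, j ≤ β + (γ - 1) → 0 < Len j ∧
      (∀ τ, 1 ≤ τ → rhoR (Len j) (P j).1 (P j).1 τ + rhoR (Len j) (P j).2 (P j).2 τ = 0)
      ∧ ∃ t, 13 * t = 6 * Len j ∧ (∀ i < t, (P j).1 i = (P j).2 i)
          ∧ (∀ i, Len j - t ≤ i → i < Len j → (P j).1 i = -(P j).2 i) := by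
    intro j
    induction j with
    | zero =>
        intro _
        rw [hLen0, hP0]
        exact ⟨by norm_num, hK26gcp, 12, by norm_num, hK26pre, hK26suf⟩
    | succ n ih =>
        intro hle
        have hn : n < β + (γ - 1) := by omega
        obtain ⟨hLpos, ihg, t, h13, hinvpre, hinvsuf⟩ := ih (by omega)
        have htK : t ≤ Len n := by omega
        rw [hPrec n hn, hLenRec n hn]
        cases hc : choice n
        · simp only [hc, Bool.false_eq_true, if_false, if_neg]
          have hcorr := turyn_corr 26 (Len n) (by norm_num) K26a K26b (P n).1 (P n).2
            hK26gcp ihg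
          have hinv := turyn_inv 26 (Len n) t (by norm_num) htK K26a K26b (P n).1 (P n).2
            hinvpre hinvsuf
          refine ⟨by omega, ?_, t * 26, by omega, ?_, ?_⟩
          · intro τ hτ
            rw [show 26 * Len n = Len n * 26 from by ring]
            exact hcorr τ hτ
          · intro i hi
            exact hinv.1 i hi
          · intro i hi1 hi2
            exact hinv.2 i (by omega) (by omega)
        · simp only [hc, if_true]
          have hcorr := turyn_corr 10 (Len n) (by norm_num) K10a K10b (P n).1 (P n).2
            hK10gcp ihg
          have hinv := turyn_inv 10 (Len n) t (by norm_num) htK K10a K10b (P n).1 (P n).2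
            hinvpre hinvsuf
          refine ⟨by omega, ?_, t * 10, by omega, ?_, ?_⟩
          · intro τ hτ
            rw [show 10 * Len n = Len n * 10 from by ring]
            exact hcorr τ hτ
          · intro i hi
            exact hinv.1 i hi
          · intro i hi1 hi2
            exact hinv.2 i (by omega) (by omega)
  obtain ⟨-, hab, t, h13, hpre, -⟩ := main (β + (γ - 1)) le_rfl
  rw [hNLen] at hab h13
  rw [← ha, ← hb] at hab hpre
  -- N is at least 26
  have hN26 : 26 ≤ N := by
    have h1 : 1 ≤ 10 ^ β := Nat.one_le_pow _ _ (by norm_num)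
    have h2 : 26 ≤ 26 ^ γ := Nat.le_self_pow (by omega) 26
    calc 26 ≤ 26 ^ γ := h2
      _ ≤ 10 ^ β * 26 ^ γ := Nat.le_mul_of_pos_left _ h1
      _ = N := hN.symm
  have hZ : 12 * N / 26 = t := by omega
  rw [hZ]
  exact assemble N t hN26 h13 a b e f he hf hpre
    (concat_corr N (by omega) a b e f he hf hab) x0 x1 y0 y1 cc1 cc2 cc3 cc4 g h hg hh
end

section
/- Let a be a binary sequence of length M and b a binary sequence of length N with M ≤ N. Assume ρ_a(τ) = −ρ_b(τ) for every 0 < τ < M, and assume ρ_b(M) = 0 whenever M < N. Define the length-(M+N) binary sequences c = a||b and d = a||(−b). Then (c,d) is an (M+N, M)-CZCP. -/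
/-- Theorem 6 of the paper: Let `a` be a binary sequence of length `M` and
`b` a binary sequence of length `N`, `M ≤ N`, with `ρ_a(τ) = -ρ_b(τ)` for `0 < τ < M`,
and `ρ_b(M) = 0` whenever `M < N`.  Then `c = a‖b` and `d = a‖(-b)` form an
`(M+N, M)`-CZCP. -/
theorem stmt_10 (M N : ℕ) (hM : 0 < M) (hMN : M ≤ N)
    (a b : ℕ → ℝ) (ha : IsBinary M a) (hb : IsBinary N b)
    (h1 : ∀ τ : ℕ, 0 < τ → τ < M → rhoR M a a τ = -rhoR N b b τ)
    (h2 : M < N → rhoR N b b M = 0)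
    (c d : ℕ → ℝ)
    (hc : ∀ i, c i = if i < M then a i else b (i - M))
    (hd : ∀ i, d i = if i < M then a i else -b (i - M)) :
    IsCZCPR (M + N) M c d := by
  have hca : ∀ k, k < M → c k = a k := fun k hk => by rw [hc, if_pos hk]
  have hcb : ∀ k, M ≤ k → c k = b (k - M) := fun k hk => by rw [hc, if_neg (by omega)]
  have hda : ∀ k, k < M → d k = a k := fun k hk => by rw [hd, if_pos hk]
  have hdb : ∀ k, M ≤ k → d k = -b (k - M) := fun k hk => by rw [hd, if_neg (by omega)]
  constructor
  · intro τ hτ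
    rcases hτ with ⟨hτ1, hτ2⟩ | ⟨hτ1, hτ2⟩
    · -- 1 ≤ τ ≤ M
      have hend : rhoR M a a τ + rhoR N b b τ = 0 := by
        rcases lt_or_eq_of_le hτ2 with h | h
        · rw [h1 τ hτ1 h]; ring
        · subst h
          have ha0 : rhoR τ a a τ = 0 := by simp [rhoR]
          rcases lt_or_eq_of_le hMN with h' | h'
          · rw [ha0, h2 h']; ring
          · subst h'; simp [rhoR] at ha0 ⊢
      have key : rhoR (M + N) c c τ + rhoR (M + N) d d τ
          = 2 * (rhoR M a a τ + rhoR N b b τ) := by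
        unfold rhoR
        rw [← Finset.sum_add_distrib,
          show M + N - τ = M - τ + τ + (N - τ) from by omega,
          Finset.sum_range_add, Finset.sum_range_add]
        have e1 : ∀ k ∈ Finset.range (M - τ),
            c k * c (k + τ) + d k * d (k + τ) = 2 * (a k * a (k + τ)) := by
          intro k hk
          rw [Finset.mem_range] at hk
          rw [hca k (by omega), hca (k + τ) (by omega),
            hda k (by omega), hda (k + τ) (by omega)]
          ring
        have e2 : ∀ i ∈ Finset.range τ,
            c (M - τ + i) * c (M - τ + i + τ) + d (M - τ + i) * d (M - τ + i + τ) = 0 := by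
          intro i hi
          rw [Finset.mem_range] at hi
          rw [hca (M - τ + i) (by omega), hcb (M - τ + i + τ) (by omega),
            hda (M - τ + i) (by omega), hdb (M - τ + i + τ) (by omega)]
          ring
        have e3 : ∀ i ∈ Finset.range (N - τ),
            c (M - τ + τ + i) * c (M - τ + τ + i + τ) + d (M - τ + τ + i) * d (M - τ + τ + i + τ)
              = 2 * (b i * b (i + τ)) := by
          intro i hi
          rw [Finset.mem_range] at hi
          rw [hcb (M - τ + τ + i) (by omega), hcb (M - τ + τ + i + τ) (by omega),
            hdb (M - τ + τ + i) (by omega), hdb (M - τ + τ + i + τ) (by omega),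
            show M - τ + τ + i - M = i from by omega,
            show M - τ + τ + i + τ - M = i + τ from by omega]
          ring
        rw [Finset.sum_congr rfl e1, Finset.sum_congr rfl e2, Finset.sum_congr rfl e3,
          Finset.sum_const_zero, ← Finset.mul_sum, ← Finset.mul_sum]
        ring
      rw [key, hend]; ring
    · -- N ≤ τ
      unfold rhoR
      rw [← Finset.sum_add_distrib]
      apply Finset.sum_eq_zero
      intro k hk
      rw [Finset.mem_range] at hk
      rw [hca k (by omega), hcb (k + τ) (by omega),
        hda k (by omega), hdb (k + τ) (by omega)]
      ring
  · intro τ ⟨hτ1, hτ2⟩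
    unfold rhoR
    rw [← Finset.sum_add_distrib]
    apply Finset.sum_eq_zero
    intro k hk
    rw [Finset.mem_range] at hk
    rw [hca k (by omega), hdb (k + τ) (by omega),
      hda k (by omega), hcb (k + τ) (by omega)]
    ring
end

section
/- Let (c,d) be a binary (N,Z)-CZCP with 2Z ≤ N. Then for every integer i with 0 ≤ i < Z: c_i·c_{N−1−i} + d_i·d_{N−1−i} = 0. (Equivalently, for each such i, exactly one of the two pairs (c_i, d_i) and (c_{N−1−i}, d_{N−1−i}) consists of equal entries, the other of opposite entries.) -/
/- ### Auxiliary lemmas -/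

/-- mod-4 identity per term: for ±1 values, `a·b' + b·a' − (a+b+a'+b') + 2` is a
multiple of 4. -/
lemma czcp_term4 (a b a' b' : ℝ) (ha : a = 1 ∨ a = -1) (hb : b = 1 ∨ b = -1)
    (ha' : a' = 1 ∨ a' = -1) (hb' : b' = 1 ∨ b' = -1) :
    ∃ t : ℤ, a * b' + b * a' - (a + b + a' + b') + 2 = 4 * t := by
  rcases ha with rfl | rfl <;> rcases hb with rfl | rfl <;>
    rcases ha' with rfl | rfl <;> rcases hb' with rfl | rfl <;>
    first
      | (refine ⟨0, ?_⟩; push_cast; norm_num; done)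
      | (refine ⟨1, ?_⟩; push_cast; norm_num; done)
      | (refine ⟨2, ?_⟩; push_cast; norm_num; done)

/-- A finite sum of multiples of 4 is a multiple of 4. -/
lemma czcp_sum4 (n : ℕ) (F : ℕ → ℝ) (h : ∀ k < n, ∃ t : ℤ, F k = 4 * t) :
    ∃ t : ℤ, ∑ k ∈ Finset.range n, F k = 4 * t := by
  induction n with
  | zero => exact ⟨0, by simp⟩
  | succ n ih =>
    obtain ⟨t, ht⟩ := ih fun k hk => h k (by omega)
    obtain ⟨s, hs⟩ := h n (by omega)
    exact ⟨t + s, by rw [Finset.sum_range_succ, ht, hs]; push_cast; ring⟩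

/-- Key congruence extracted from a vanishing cross-correlation sum. -/
lemma czcp_cross_sum (n τ : ℕ) (u v : ℕ → ℝ)
    (h1 : ∀ k < n, u k = 1 ∨ u k = -1) (h2 : ∀ k < n, v k = 1 ∨ v k = -1)
    (h3 : ∀ k < n, u (k + τ) = 1 ∨ u (k + τ) = -1)
    (h4 : ∀ k < n, v (k + τ) = 1 ∨ v (k + τ) = -1)
    (hz : (∑ k ∈ Finset.range n, u k * v (k + τ)) +
          (∑ k ∈ Finset.range n, v k * u (k + τ)) = 0) :
    ∃ t : ℤ, (∑ k ∈ Finset.range n, (u k + v k)) +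
        (∑ k ∈ Finset.range n, (u (k + τ) + v (k + τ))) = 2 * n + 4 * t := by
  obtain ⟨t, ht⟩ := czcp_sum4 n
    (fun k => u k * v (k + τ) + v k * u (k + τ)
      - (u k + v k + u (k + τ) + v (k + τ)) + 2)
    (fun k hk => czcp_term4 _ _ _ _ (h1 k hk) (h2 k hk) (h3 k hk) (h4 k hk))
  refine ⟨-t, ?_⟩
  have e1 : ∑ k ∈ Finset.range n,
      (u k * v (k + τ) + v k * u (k + τ)
        - (u k + v k + u (k + τ) + v (k + τ)) + 2)
      = ((∑ k ∈ Finset.range n, u k * v (k + τ)) +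
          (∑ k ∈ Finset.range n, v k * u (k + τ)))
        - ((∑ k ∈ Finset.range n, (u k + v k)) +
           (∑ k ∈ Finset.range n, (u (k + τ) + v (k + τ)))) + 2 * n := by
    simp only [Finset.sum_add_distrib, Finset.sum_sub_distrib, Finset.sum_const,
      Finset.card_range, nsmul_eq_mul]
    ring
  rw [e1, hz] at ht
  push_cast at ht ⊢
  linarith

lemma czcp_pair_sum (a b : ℝ) (ha : a = 1 ∨ a = -1) (hb : b = 1 ∨ b = -1) :
    ∃ u : ℤ, (-1 ≤ u ∧ u ≤ 1) ∧ a + b = 2 * u := by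
  rcases ha with rfl | rfl <;> rcases hb with rfl | rfl
  · exact ⟨1, by norm_num, by norm_num⟩
  · exact ⟨0, by norm_num, by norm_num⟩
  · exact ⟨0, by norm_num, by norm_num⟩
  · exact ⟨-1, by norm_num, by norm_num⟩

/-- Final case analysis: if ±1 values satisfy `a+b+a'+b' = 2+4t`, then
`a·a' + b·b' = 0`. -/
lemma czcp_final (a b a' b' : ℝ) (ha : a = 1 ∨ a = -1) (hb : b = 1 ∨ b = -1)
    (ha' : a' = 1 ∨ a' = -1) (hb' : b' = 1 ∨ b' = -1) (t : ℤ)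
    (h : a + b + (a' + b') = 2 + 4 * t) : a * a' + b * b' = 0 := by
  obtain ⟨x, hx, hab⟩ := czcp_pair_sum a b ha hb
  obtain ⟨y, hy, hab'⟩ := czcp_pair_sum a' b' ha' hb'
  have hxy : x + y = 1 + 2 * t := by
    have : ((x + y : ℤ) : ℝ) = ((1 + 2 * t : ℤ) : ℝ) := by push_cast; linarith
    exact_mod_cast this
  have hcase : (x = 0 ∧ y ≠ 0) ∨ (x ≠ 0 ∧ y = 0) := by omega
  rcases hcase with ⟨hx0, hy0⟩ | ⟨hx0, hy0⟩
  · have hb2 : b = -a := by rw [hx0] at hab; push_cast at hab; linarith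
    have heq : a' = b' := by
      rcases ha' with rfl | rfl <;> rcases hb' with rfl | rfl
      · rfl
      · exfalso; apply hy0
        have : ((y : ℤ) : ℝ) = 0 := by push_cast; linarith
        exact_mod_cast this
      · exfalso; apply hy0
        have : ((y : ℤ) : ℝ) = 0 := by push_cast; linarith
        exact_mod_cast this
      · rfl
    rw [hb2, ← heq]; ring
  · have hb2 : b' = -a' := by rw [hy0] at hab'; push_cast at hab'; linarith
    have heq : a = b := by
      rcases ha with rfl | rfl <;> rcases hb with rfl | rfl
      · rfl
      · exfalso; apply hx0
        have : ((x : ℤ) : ℝ) = 0 := by push_cast; linarith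
        exact_mod_cast this
      · exfalso; apply hx0
        have : ((x : ℤ) : ℝ) = 0 := by push_cast; linarith
        exact_mod_cast this
      · rfl
    rw [hb2, ← heq]; ring

/-- Property 1 of the paper: Let `(c, d)` be a binary `(N, Z)`-CZCP with
`2Z ≤ N`.  Then for every `i < Z`: `c_i·c_{N-1-i} + d_i·d_{N-1-i} = 0`. -/
theorem stmt_12 (N Z : ℕ) (c d : ℕ → ℝ)
    (hc : IsBinary N c) (hd : IsBinary N d) (hcd : IsCZCPR N Z c d)
    (hZ : 2 * Z ≤ N) (i : ℕ) (hi : i < Z) :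
    c i * c (N - 1 - i) + d i * d (N - 1 - i) = 0 := by
  have hZ1 : 1 ≤ Z := by omega
  have hN2 : 2 ≤ N := by omega
  obtain ⟨hC1, hC2⟩ := hcd
  -- the key congruence for each j < Z
  have key : ∀ j < Z, ∃ t : ℤ,
      (∑ k ∈ Finset.range (j + 1), (c k + d k)) +
      (∑ k ∈ Finset.range (j + 1), (c (k + (N - 1 - j)) + d (k + (N - 1 - j))))
        = 2 * (j + 1) + 4 * t := by
    intro j hj
    have hz := hC2 (N - 1 - j) ⟨by omega, by omega⟩
    unfold rhoR at hz
    have hrange : N - (N - 1 - j) = j + 1 := by omega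
    rw [hrange] at hz
    obtain ⟨t, ht⟩ := czcp_cross_sum (j + 1) (N - 1 - j) c d
      (fun k hk => hc k (by omega)) (fun k hk => hd k (by omega))
      (fun k hk => hc (k + (N - 1 - j)) (by omega))
      (fun k hk => hd (k + (N - 1 - j)) (by omega)) hz
    refine ⟨t, ?_⟩
    rw [ht]; push_cast; ring
  have hiN : i < N := by omega
  have hmN : N - 1 - i < N := by omega
  obtain ⟨t, ht⟩ := key i hi
  rcases Nat.eq_zero_or_pos i with rfl | hip
  · -- base case i = 0
    simp only [Finset.sum_range_one, Nat.zero_add] at ht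
    refine czcp_final _ _ _ _ (hc 0 (by omega)) (hd 0 (by omega))
      (hc (N - 1 - 0) hmN) (hd (N - 1 - 0) hmN) t ?_
    push_cast at ht
    linarith
  · -- inductive-difference case i ≥ 1
    obtain ⟨t', ht'⟩ := key (i - 1) (by omega)
    have hi1 : i - 1 + 1 = i := by omega
    rw [hi1] at ht'
    rw [Nat.cast_sub (by omega : 1 ≤ i)] at ht'
    have hsh : N - 1 - (i - 1) = N - i := by omega
    rw [hsh] at ht'
    -- split the sums in ht
    rw [Finset.sum_range_succ] at ht
    rw [Finset.sum_range_succ'] at ht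
    have hidx : ∀ k, k ∈ Finset.range i →
        c (k + 1 + (N - 1 - i)) + d (k + 1 + (N - 1 - i))
          = c (k + (N - i)) + d (k + (N - i)) := by
      intro k _
      have : k + 1 + (N - 1 - i) = k + (N - i) := by omega
      rw [this]
    rw [Finset.sum_congr rfl hidx] at ht
    simp only [Nat.zero_add] at ht
    refine czcp_final _ _ _ _ (hc i hiN) (hd i hiN)
      (hc (N - 1 - i) hmN) (hd (N - 1 - i) hmN) (t - t') ?_
    push_cast at ht ht' ⊢
    linarith
end

section
/- Let (a,b) be a binary GCP of length N ≥ 2. Then a_0·b_{N−1} + b_0·a_{N−1} = 0, and consequently (a,b) is a binary (N,1)-CZCP. -/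
/-- Theorem 7 of the paper: every binary GCP `(a, b)` of length `N ≥ 2`
satisfies `a₀·b_{N-1} + b₀·a_{N-1} = 0`, and consequently is a binary `(N, 1)`-CZCP. -/
theorem stmt_13 (N : ℕ) (hN : 2 ≤ N) (a b : ℕ → ℝ) (hab : IsGCP N a b) :
    a 0 * b (N - 1) + b 0 * a (N - 1) = 0 ∧ IsCZCPR N 1 a b := by
  obtain ⟨ha, hb, hsum⟩ := hab
  have hone : N - (N - 1) = 1 := by omega
  have hrho : ∀ u v : ℕ → ℝ, rhoR N u v (N - 1) = u 0 * v (N - 1) := by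
    intro u v
    simp [rhoR, hone]
  have hkey : a 0 * a (N - 1) + b 0 * b (N - 1) = 0 := by
    have := hsum (N - 1) (by omega) le_rfl
    rwa [hrho, hrho] at this
  have ha0 := ha 0 (by omega)
  have haN := ha (N - 1) (by omega)
  have hb0 := hb 0 (by omega)
  have hbN := hb (N - 1) (by omega)
  have hcross : a 0 * b (N - 1) + b 0 * a (N - 1) = 0 := by
    rcases ha0 with h1 | h1 <;> rcases haN with h2 | h2 <;>
      rcases hb0 with h3 | h3 <;> rcases hbN with h4 | h4 <;>
      rw [h1, h2, h3, h4] at hkey ⊢ <;> linarith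
  refine ⟨hcross, ?_, ?_⟩
  · rintro τ (⟨h1, h2⟩ | ⟨h1, h2⟩)
    · exact hsum τ h1 (by omega)
    · exact hsum τ (by omega) h2
  · rintro τ ⟨h1, h2⟩
    have : τ = N - 1 := by omega
    subst this
    rw [hrho, hrho]
    exact hcross
end

section
/- Let (a,b) be a binary GCP of length M and let (c,d) be a binary (N,Z)-CZCP. Define length-NM binary sequences e, f by e_{mM+j} = c_m·(a_j+b_j)/2 − d_{N−1−m}·(b_j−a_j)/2 and f_{mM+j} = d_m·(a_j+b_j)/2 + c_{N−1−m}·(b_j−a_j)/2 for 0 ≤ m < N and 0 ≤ j < M. Then (e,f) is a binary (NM, ZM)-CZCP. -/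
open Finset

private lemma reflPair (N σ n : ℕ) (h : n + σ = N) (p q : ℕ → ℝ) :
    ∑ m ∈ range n, p (N-1-m) * q (N-1-(m+σ)) = ∑ m ∈ range n, q m * p (m+σ) := by
  rw [← Finset.sum_range_reflect]
  refine Finset.sum_congr rfl fun m hm => ?_
  simp only [Finset.mem_range] at hm
  rw [show N-1-(n-1-m) = m+σ by omega, show N-1-((n-1-m)+σ) = m by omega]
  ring

private lemma reflSwap (N σ n : ℕ) (h : n + σ = N) (p q : ℕ → ℝ) :
    ∑ m ∈ range n, p m * q (N-1-(m+σ)) = ∑ m ∈ range n, q m * p (N-1-(m+σ)) := by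
  rw [← Finset.sum_range_reflect]
  refine Finset.sum_congr rfl fun m hm => ?_
  simp only [Finset.mem_range] at hm
  rw [show n-1-m+σ = N-1-m by omega, show N-1-(N-1-m) = m by omega,
    show N-1-(m+σ) = n-1-m by omega]
  ring

private lemma reflSwap2 (N σ n : ℕ) (h : n + σ = N) (p q : ℕ → ℝ) :
    ∑ m ∈ range n, p (N-1-m) * q (m+σ) = ∑ m ∈ range n, q (N-1-m) * p (m+σ) := by
  rw [← Finset.sum_range_reflect]
  refine Finset.sum_congr rfl fun m hm => ?_
  simp only [Finset.mem_range] at hm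
  rw [show N-1-(n-1-m) = m+σ by omega, show n-1-m+σ = N-1-m by omega]
  ring

private lemma expand4 (A B : ℕ) (p1 p2 q1 q2 g1 g2 h1 h2 : ℕ → ℝ) :
    ∑ m ∈ range A, ∑ j ∈ range B,
      (p1 m * g1 j + p2 m * g2 j) * (q1 m * h1 j + q2 m * h2 j)
    = (∑ m ∈ range A, p1 m * q1 m) * (∑ j ∈ range B, g1 j * h1 j)
    + (∑ m ∈ range A, p1 m * q2 m) * (∑ j ∈ range B, g1 j * h2 j)
    + (∑ m ∈ range A, p2 m * q1 m) * (∑ j ∈ range B, g2 j * h1 j)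
    + (∑ m ∈ range A, p2 m * q2 m) * (∑ j ∈ range B, g2 j * h2 j) := by
  simp only [Finset.sum_mul_sum]
  rw [← Finset.sum_add_distrib, ← Finset.sum_add_distrib, ← Finset.sum_add_distrib]
  refine Finset.sum_congr rfl fun m _ => ?_
  rw [← Finset.sum_add_distrib, ← Finset.sum_add_distrib, ← Finset.sum_add_distrib]
  exact Finset.sum_congr rfl fun j _ => by ring

private lemma blockA (M : ℕ) (u v : ℕ → ℝ) (s t r : ℕ) (htr : t + r = M) (P : ℕ) :
    ∑ k ∈ range (P*M + r), u k * v (k + (s*M+t))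
    = (∑ m ∈ range (P+1), ∑ j ∈ range r, u (m*M+j) * v ((m+s)*M+(j+t)))
    + ∑ m ∈ range P, ∑ j ∈ range t, u (m*M+(r+j)) * v ((m+s+1)*M+j) := by
  induction P with
  | zero =>
    simp only [zero_mul, zero_add, Finset.range_zero, Finset.sum_empty, add_zero,
      Finset.sum_range_one]
    refine Finset.sum_congr rfl fun j hj => ?_
    rw [show j + (s*M+t) = s*M+(j+t) by omega]
  | succ P IH =>
    have h1 : (P+1)*M + r = (P*M + r) + (t + r) := by rw [htr]; ring
    rw [h1, Finset.sum_range_add (fun k => u k * v (k + (s*M+t))) (P*M+r) (t+r),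
      Finset.sum_range_add (fun i => u (P*M+r+i) * v ((P*M+r+i) + (s*M+t))) t r, IH]
    rw [Finset.sum_range_succ (fun m => ∑ j ∈ range r, u (m*M+j) * v ((m+s)*M+(j+t))) (P+1),
      Finset.sum_range_succ (fun m => ∑ j ∈ range t, u (m*M+(r+j)) * v ((m+s+1)*M+j)) P]
    have h2 : ∀ i ∈ range t, u (P*M+r+i) * v (P*M+r+i + (s*M+t))
        = u (P*M+(r+i)) * v ((P+s+1)*M+i) := by
      intro i hi
      have e2 : P*M+r+i + (s*M+t) = (P+s+1)*M+i := by
        have : (P+s+1)*M = P*M + s*M + M := by ring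
        omega
      have e1 : P*M+r+i = P*M+(r+i) := by omega
      rw [e2, e1]
    have h3 : ∀ i ∈ range r, u (P*M+r+(t+i)) * v (P*M+r+(t+i) + (s*M+t))
        = u ((P+1)*M+i) * v ((P+1+s)*M+(i+t)) := by
      intro i hi
      have e2 : P*M+r+(t+i) + (s*M+t) = (P+1+s)*M+(i+t) := by
        have : (P+1+s)*M = P*M + s*M + M := by ring
        omega
      have e1 : P*M+r+(t+i) = (P+1)*M+i := by
        have : (P+1)*M = P*M+M := by ring
        omega
      rw [e2, e1]
    rw [Finset.sum_congr rfl h2, Finset.sum_congr rfl h3]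
    ring

private lemma turynRho (M N s t r P : ℕ) (htr : t + r = M) (hNP : N = s + 1 + P)
    (p1 p2 q1 q2 g1 g2 h1 h2 u v : ℕ → ℝ)
    (hu : ∀ m j, j < M → u (m*M+j) = p1 m * g1 j + p2 m * g2 j)
    (hv : ∀ m j, j < M → v (m*M+j) = q1 m * h1 j + q2 m * h2 j) :
    rhoR (N*M) u v (s*M+t) =
      (∑ m ∈ range (P+1), p1 m * q1 (m+s)) * (∑ j ∈ range r, g1 j * h1 (j+t))
    + (∑ m ∈ range (P+1), p1 m * q2 (m+s)) * (∑ j ∈ range r, g1 j * h2 (j+t))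
    + (∑ m ∈ range (P+1), p2 m * q1 (m+s)) * (∑ j ∈ range r, g2 j * h1 (j+t))
    + (∑ m ∈ range (P+1), p2 m * q2 (m+s)) * (∑ j ∈ range r, g2 j * h2 (j+t))
    + (∑ m ∈ range P, p1 m * q1 (m+(s+1))) * (∑ j ∈ range t, g1 (r+j) * h1 j)
    + (∑ m ∈ range P, p1 m * q2 (m+(s+1))) * (∑ j ∈ range t, g1 (r+j) * h2 j)
    + (∑ m ∈ range P, p2 m * q1 (m+(s+1))) * (∑ j ∈ range t, g2 (r+j) * h1 j)
    + (∑ m ∈ range P, p2 m * q2 (m+(s+1))) * (∑ j ∈ range t, g2 (r+j) * h2 j) := by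
  have hNM : N*M - (s*M+t) = P*M + r := by
    have : N*M = s*M + t + (P*M + r) := by
      subst hNP; rw [← htr]; ring
    omega
  unfold rhoR
  rw [hNM, blockA M u v s t r htr P]
  have hblock1 : ∀ m ∈ range (P+1), ∀ j ∈ range r,
      u (m*M+j) * v ((m+s)*M+(j+t))
      = (p1 m * g1 j + p2 m * g2 j) * (q1 (m+s) * h1 (j+t) + q2 (m+s) * h2 (j+t)) := by
    intro m _ j hj
    simp only [mem_range] at hj
    rw [hu m j (by omega), hv (m+s) (j+t) (by omega)]
  have hblock2 : ∀ m ∈ range P, ∀ j ∈ range t,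
      u (m*M+(r+j)) * v ((m+s+1)*M+j)
      = (p1 m * g1 (r+j) + p2 m * g2 (r+j)) * (q1 (m+(s+1)) * h1 j + q2 (m+(s+1)) * h2 j) := by
    intro m _ j hj
    simp only [mem_range] at hj
    rw [hu m (r+j) (by omega), hv (m+s+1) j (by omega), show m+s+1 = m+(s+1) by omega]
  rw [Finset.sum_congr rfl (fun m hm => Finset.sum_congr rfl (hblock1 m hm)),
    Finset.sum_congr rfl (fun m hm => Finset.sum_congr rfl (hblock2 m hm)),
    expand4 (P+1) r p1 p2 (fun m => q1 (m+s)) (fun m => q2 (m+s)) g1 g2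
      (fun j => h1 (j+t)) (fun j => h2 (j+t)),
    expand4 P t p1 p2 (fun m => q1 (m+(s+1))) (fun m => q2 (m+(s+1)))
      (fun j => g1 (r+j)) (fun j => g2 (r+j)) h1 h2]
  ring

private lemma gcpXY (M : ℕ) (a b : ℕ → ℝ)
    (hgcp : ∀ τ : ℕ, 1 ≤ τ → τ ≤ M - 1 → rhoR M a a τ + rhoR M b b τ = 0)
    (t r : ℕ) (h1 : 1 ≤ t) (h2 : t ≤ M - 1) (htr : t + r = M) :
    (∑ j ∈ range r, (a j + b j)/2 * ((a (j+t) + b (j+t))/2))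
    + ∑ j ∈ range r, (a j - b j)/2 * ((a (j+t) - b (j+t))/2) = 0 := by
  have hg := hgcp t h1 h2
  unfold rhoR at hg
  rw [show M - t = r by omega] at hg
  calc (∑ j ∈ range r, (a j + b j)/2 * ((a (j+t) + b (j+t))/2))
      + ∑ j ∈ range r, (a j - b j)/2 * ((a (j+t) - b (j+t))/2)
      = ∑ j ∈ range r, (a j * a (j+t) + b j * b (j+t))/2 := by
        rw [← Finset.sum_add_distrib]
        exact Finset.sum_congr rfl fun j _ => by ring
    _ = ((∑ j ∈ range r, a j * a (j+t)) + ∑ j ∈ range r, b j * b (j+t))/2 := by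
        rw [← Finset.sum_add_distrib, ← Finset.sum_div]
    _ = 0 := by rw [hg]; norm_num

/-- Theorem 8 of the paper: If `(a, b)` is a binary GCP of length `M` and
`(c, d)` a binary `(N, Z)`-CZCP, then the Turyn product sequences `e, f` of length `N·M`,
given at index `mM + j` (`m = i / M`, `j = i % M`) by
`e_{mM+j} = c_m (a_j + b_j)/2 - d_{N-1-m} (b_j - a_j)/2` and
`f_{mM+j} = d_m (a_j + b_j)/2 + c_{N-1-m} (b_j - a_j)/2`,
form a binary `(NM, ZM)`-CZCP. -/
theorem stmt_15 (M N Z : ℕ) (hM : 0 < M) (hN : 0 < N)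
    (a b : ℕ → ℝ) (hab : IsGCP M a b)
    (c d : ℕ → ℝ) (hc : IsBinary N c) (hd : IsBinary N d) (hcd : IsCZCPR N Z c d)
    (e f : ℕ → ℝ)
    (he : ∀ i, e i = c (i / M) * (a (i % M) + b (i % M)) / 2
      - d (N - 1 - i / M) * (b (i % M) - a (i % M)) / 2)
    (hf : ∀ i, f i = d (i / M) * (a (i % M) + b (i % M)) / 2
      + c (N - 1 - i / M) * (b (i % M) - a (i % M)) / 2) :
    IsBinary (N * M) e ∧ IsBinary (N * M) f ∧ IsCZCPR (N * M) (Z * M) e f := by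
  obtain ⟨ha, hb, hgcp⟩ := hab
  obtain ⟨hC1, hC2⟩ := hcd
  have heB : ∀ m j, j < M → e (m*M+j) = c m * ((a j + b j)/2) + d (N-1-m) * ((a j - b j)/2) := by
    intro m j hj
    have h1 : (m*M+j) / M = m := by
      rw [mul_comm m M, Nat.mul_add_div hM, Nat.div_eq_of_lt hj, add_zero]
    have h2 : (m*M+j) % M = j := by
      rw [mul_comm m M, Nat.mul_add_mod, Nat.mod_eq_of_lt hj]
    rw [he (m*M+j), h1, h2]; ring
  have hfB : ∀ m j, j < M → f (m*M+j) = d m * ((a j + b j)/2) + -c (N-1-m) * ((a j - b j)/2) := by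
    intro m j hj
    have h1 : (m*M+j) / M = m := by
      rw [mul_comm m M, Nat.mul_add_div hM, Nat.div_eq_of_lt hj, add_zero]
    have h2 : (m*M+j) % M = j := by
      rw [mul_comm m M, Nat.mul_add_mod, Nat.mod_eq_of_lt hj]
    rw [hf (m*M+j), h1, h2]; ring
  by_cases hZN : N ≤ Z
  · exfalso
    have h0 := hC1 0 (Or.inr ⟨by omega, by omega⟩)
    unfold rhoR at h0
    rw [Nat.sub_zero, ← Finset.sum_add_distrib] at h0
    have h1 : ∀ k ∈ range N, c k * c (k+0) + d k * d (k+0) = 2 := by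
      intro k hk
      simp only [mem_range] at hk
      rcases hc k hk with h|h <;> rcases hd k hk with h'|h' <;>
        rw [Nat.add_zero, h, h'] <;> norm_num
    rw [Finset.sum_congr rfl h1, Finset.sum_const, Finset.card_range, nsmul_eq_mul] at h0
    have hNpos : (0:ℝ) < N := by exact_mod_cast hN
    nlinarith
  push_neg at hZN
  have dich : (∀ k, k < Z → c k = d k ∧ c (N-1-k) = -d (N-1-k)) ∨
      (∀ k, k < Z → c k = -d k ∧ c (N-1-k) = d (N-1-k)) := by
    rcases Nat.eq_zero_or_pos Z with rfl | hZ1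
    · exact Or.inl fun k hk => absurd hk (Nat.not_lt_zero k)
    have hS : ∀ w, w < Z →
        ∑ k ∈ range (w+1), (c k + d k) * (c (k+(N-1-w)) + d (k+(N-1-w))) = 0 := by
      intro w hw
      have hA := hC1 (N-1-w) (Or.inr ⟨by omega, by omega⟩)
      have hB := hC2 (N-1-w) ⟨by omega, by omega⟩
      unfold rhoR at hA hB
      rw [show N - (N-1-w) = w+1 by omega] at hA hB
      calc ∑ k ∈ range (w+1), (c k + d k) * (c (k+(N-1-w)) + d (k+(N-1-w)))
          = ∑ k ∈ range (w+1), (c k * c (k+(N-1-w)) + d k * d (k+(N-1-w))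
              + (c k * d (k+(N-1-w)) + d k * c (k+(N-1-w)))) :=
            Finset.sum_congr rfl fun k _ => by ring
        _ = 0 := by
            rw [Finset.sum_add_distrib, Finset.sum_add_distrib, Finset.sum_add_distrib]
            linarith [hA, hB]
    have hD : ∀ w, w < Z →
        ∑ k ∈ range (w+1), (c k - d k) * (c (k+(N-1-w)) - d (k+(N-1-w))) = 0 := by
      intro w hw
      have hA := hC1 (N-1-w) (Or.inr ⟨by omega, by omega⟩)
      have hB := hC2 (N-1-w) ⟨by omega, by omega⟩
      unfold rhoR at hA hB
      rw [show N - (N-1-w) = w+1 by omega] at hA hB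
      calc ∑ k ∈ range (w+1), (c k - d k) * (c (k+(N-1-w)) - d (k+(N-1-w)))
          = ∑ k ∈ range (w+1), (c k * c (k+(N-1-w)) + d k * d (k+(N-1-w))
              - (c k * d (k+(N-1-w)) + d k * c (k+(N-1-w)))) :=
            Finset.sum_congr rfl fun k _ => by ring
        _ = 0 := by
            rw [Finset.sum_sub_distrib, Finset.sum_add_distrib, Finset.sum_add_distrib]
            linarith [hA, hB]
    by_cases h0 : c 0 = d 0
    · left
      have hc0 : c 0 = 1 ∨ c 0 = -1 := hc 0 hN
      have h00 : c 0 + d 0 ≠ 0 := by rw [← h0]; rcases hc0 with h|h <;> rw [h] <;> norm_num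
      have hN1 : c (N-1) = -d (N-1) := by
        have h := hS 0 hZ1
        rw [Finset.sum_range_one, show 0+(N-1-0) = N-1 by omega] at h
        rcases mul_eq_zero.mp h with h'|h'
        · exact absurd h' h00
        · linarith
      have hdN1 : d (N-1) = 1 ∨ d (N-1) = -1 := hd (N-1) (by omega)
      have front : ∀ k, k < Z → c k = d k := by
        intro k
        induction k using Nat.strong_induction_on with
        | _ k IH =>
          intro hk
          have h := hD k hk
          have hsing : ∑ i ∈ range (k+1), (c i - d i) * (c (i+(N-1-k)) - d (i+(N-1-k)))
              = (c k - d k) * (c (k+(N-1-k)) - d (k+(N-1-k))) := by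
            refine Finset.sum_eq_single_of_mem k (Finset.self_mem_range_succ k)
              fun i hi hne => ?_
            simp only [mem_range] at hi
            rw [IH i (by omega) (by omega)]; ring
          rw [hsing, show k+(N-1-k) = N-1 by omega] at h
          rcases mul_eq_zero.mp h with h'|h'
          · linarith
          · exfalso; rw [hN1] at h'
            rcases hdN1 with h''|h'' <;> rw [h''] at h' <;> norm_num at h'
      have tail : ∀ k, k < Z → c (N-1-k) = -d (N-1-k) := by
        intro k
        induction k using Nat.strong_induction_on with
        | _ k IH =>
          intro hk
          have h := hS k hk
          have hsing : ∑ i ∈ range (k+1), (c i + d i) * (c (i+(N-1-k)) + d (i+(N-1-k)))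
              = (c 0 + d 0) * (c (0+(N-1-k)) + d (0+(N-1-k))) := by
            refine Finset.sum_eq_single_of_mem 0 (Finset.mem_range.mpr (by omega))
              fun i hi hne => ?_
            simp only [mem_range] at hi
            rw [show i+(N-1-k) = N-1-(k-i) by omega, IH (k-i) (by omega) (by omega)]
            ring
          rw [hsing, show 0+(N-1-k) = N-1-k by omega] at h
          rcases mul_eq_zero.mp h with h'|h'
          · exact absurd h' h00
          · linarith
      exact fun k hk => ⟨front k hk, tail k hk⟩
    · right
      have h0' : c 0 = -d 0 := by
        rcases hc 0 hN with h|h <;> rcases hd 0 hN with h'|h'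
        · exact absurd (h.trans h'.symm) h0
        · simp [h, h']
        · simp [h, h']
        · exact absurd (h.trans h'.symm) h0
      have h00 : c 0 - d 0 ≠ 0 := by
        rw [h0']; rcases hd 0 hN with h|h <;> rw [h] <;> norm_num
      have hN1 : c (N-1) = d (N-1) := by
        have h := hD 0 hZ1
        rw [Finset.sum_range_one, show 0+(N-1-0) = N-1 by omega] at h
        rcases mul_eq_zero.mp h with h'|h'
        · exact absurd h' h00
        · linarith
      have hdN1 : d (N-1) = 1 ∨ d (N-1) = -1 := hd (N-1) (by omega)
      have front : ∀ k, k < Z → c k = -d k := by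
        intro k
        induction k using Nat.strong_induction_on with
        | _ k IH =>
          intro hk
          have h := hS k hk
          have hsing : ∑ i ∈ range (k+1), (c i + d i) * (c (i+(N-1-k)) + d (i+(N-1-k)))
              = (c k + d k) * (c (k+(N-1-k)) + d (k+(N-1-k))) := by
            refine Finset.sum_eq_single_of_mem k (Finset.self_mem_range_succ k)
              fun i hi hne => ?_
            simp only [mem_range] at hi
            rw [IH i (by omega) (by omega)]; ring
          rw [hsing, show k+(N-1-k) = N-1 by omega] at h
          rcases mul_eq_zero.mp h with h'|h'
          · linarith
          · exfalso; rw [hN1] at h'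
            rcases hdN1 with h''|h'' <;> rw [h''] at h' <;> norm_num at h'
      have tail : ∀ k, k < Z → c (N-1-k) = d (N-1-k) := by
        intro k
        induction k using Nat.strong_induction_on with
        | _ k IH =>
          intro hk
          have h := hD k hk
          have hsing : ∑ i ∈ range (k+1), (c i - d i) * (c (i+(N-1-k)) - d (i+(N-1-k)))
              = (c 0 - d 0) * (c (0+(N-1-k)) - d (0+(N-1-k))) := by
            refine Finset.sum_eq_single_of_mem 0 (Finset.mem_range.mpr (by omega))
              fun i hi hne => ?_
            simp only [mem_range] at hi
            rw [show i+(N-1-k) = N-1-(k-i) by omega, IH (k-i) (by omega) (by omega)]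
            ring
          rw [hsing, show 0+(N-1-k) = N-1-k by omega] at h
          rcases mul_eq_zero.mp h with h'|h'
          · exact absurd h' h00
          · linarith
      exact fun k hk => ⟨front k hk, tail k hk⟩
  refine ⟨?_, ?_, ?_, ?_⟩
  · intro i hi
    have hj : i % M < M := Nat.mod_lt _ hM
    have hm : i / M < N := (Nat.div_lt_iff_lt_mul hM).mpr hi
    have hm' : N-1-i/M < N := lt_of_le_of_lt (Nat.sub_le _ _) (by omega)
    rcases ha (i % M) hj with h1|h1 <;> rcases hb (i % M) hj with h2|h2 <;>
      rcases hc (i / M) hm with h3|h3 <;> rcases hd (N-1-i/M) hm' with h4|h4 <;>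
      rw [he i, h1, h2, h3, h4] <;> norm_num
  · intro i hi
    have hj : i % M < M := Nat.mod_lt _ hM
    have hm : i / M < N := (Nat.div_lt_iff_lt_mul hM).mpr hi
    have hm' : N-1-i/M < N := lt_of_le_of_lt (Nat.sub_le _ _) (by omega)
    rcases ha (i % M) hj with h1|h1 <;> rcases hb (i % M) hj with h2|h2 <;>
      rcases hd (i / M) hm with h3|h3 <;> rcases hc (N-1-i/M) hm' with h4|h4 <;>
      rw [hf i, h1, h2, h3, h4] <;> norm_num
  · -- C1 for (e,f)
    intro τ hzone
    have hNM0 : 0 < N*M := Nat.mul_pos hN hM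
    have hτNM : τ < N*M := by
      rcases hzone with ⟨h1,h2⟩|⟨h1,h2⟩
      · have h4 : (Z+1)*M ≤ N*M := Nat.mul_le_mul_right M (by omega)
        have h5 : (Z+1)*M = Z*M + M := by ring
        omega
      · omega
    obtain ⟨s, t, hτ, ht, hs⟩ : ∃ s t, s*M + t = τ ∧ t < M ∧ s < N :=
      ⟨τ/M, τ%M, by rw [mul_comm]; exact Nat.div_add_mod τ M, Nat.mod_lt _ hM,
        (Nat.div_lt_iff_lt_mul hM).mpr hτNM⟩
    subst hτ
    obtain ⟨P, hNP⟩ : ∃ P, N = s + 1 + P := ⟨N-1-s, by omega⟩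
    obtain ⟨r, htr⟩ : ∃ r, t + r = M := ⟨M-t, by omega⟩
    rcases Nat.eq_zero_or_pos t with rfl | htpos
    · -- t = 0
      have hsz : (1 ≤ s ∧ s ≤ Z) ∨ (N - Z ≤ s ∧ s ≤ N-1) := by
        rcases hzone with ⟨h1,h2⟩|⟨h1,h2⟩
        · left
          refine ⟨?_, Nat.le_of_mul_le_mul_right (by omega) hM⟩
          rcases Nat.eq_zero_or_pos s with rfl|h
          · omega
          · exact h
        · right
          have e3 : (N-Z)*M = N*M - Z*M := Nat.sub_mul N Z M
          exact ⟨Nat.le_of_mul_le_mul_right (by omega) hM, by omega⟩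
      have hv := hC1 s hsz
      unfold rhoR at hv
      rw [show N - s = P+1 by omega] at hv
      have Hee := turynRho M N s 0 r P htr hNP c (fun m => d (N-1-m)) c (fun m => d (N-1-m))
        (fun j => (a j + b j)/2) (fun j => (a j - b j)/2)
        (fun j => (a j + b j)/2) (fun j => (a j - b j)/2) e e heB heB
      have Hff := turynRho M N s 0 r P htr hNP d (fun m => -c (N-1-m)) d (fun m => -c (N-1-m))
        (fun j => (a j + b j)/2) (fun j => (a j - b j)/2)
        (fun j => (a j + b j)/2) (fun j => (a j - b j)/2) f f hfB hfB
      rw [Hee, Hff]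
      simp only [Finset.range_zero, Finset.sum_empty, mul_zero, add_zero, zero_add,
        Nat.add_zero, neg_mul, mul_neg, neg_neg, Finset.sum_neg_distrib]
      rw [reflPair N s (P+1) (by omega) d d, reflPair N s (P+1) (by omega) c c,
        reflSwap N s (P+1) (by omega) c d, reflSwap2 N s (P+1) (by omega) d c]
      linear_combination ((∑ j ∈ range r, (a j + b j)/2 * ((a j + b j)/2))
        + ∑ j ∈ range r, (a j - b j)/2 * ((a j - b j)/2)) * hv
    · -- t ≥ 1
      have Hee := turynRho M N s t r P htr hNP c (fun m => d (N-1-m)) c (fun m => d (N-1-m))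
        (fun j => (a j + b j)/2) (fun j => (a j - b j)/2)
        (fun j => (a j + b j)/2) (fun j => (a j - b j)/2) e e heB heB
      have Hff := turynRho M N s t r P htr hNP d (fun m => -c (N-1-m)) d (fun m => -c (N-1-m))
        (fun j => (a j + b j)/2) (fun j => (a j - b j)/2)
        (fun j => (a j + b j)/2) (fun j => (a j - b j)/2) f f hfB hfB
      rw [Hee, Hff]
      simp only [neg_mul, mul_neg, neg_neg, Finset.sum_neg_distrib]
      rw [reflPair N s (P+1) (by omega) d d, reflPair N s (P+1) (by omega) c c,
        reflSwap N s (P+1) (by omega) c d, reflSwap2 N s (P+1) (by omega) d c,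
        reflPair N (s+1) P (by omega) d d, reflPair N (s+1) P (by omega) c c,
        reflSwap N (s+1) P (by omega) c d, reflSwap2 N (s+1) P (by omega) d c]
      have hXt := gcpXY M a b hgcp t r htpos (by omega) htr
      have hXr2 : (∑ j ∈ range t, (a (r+j) + b (r+j))/2 * ((a j + b j)/2))
          + ∑ j ∈ range t, (a (r+j) - b (r+j))/2 * ((a j - b j)/2) = 0 := by
        have k1 : ∑ j ∈ range t, (a (r+j) + b (r+j))/2 * ((a j + b j)/2)
            = ∑ j ∈ range t, (a j + b j)/2 * ((a (j+r) + b (j+r))/2) := by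
          refine Finset.sum_congr rfl fun j _ => ?_
          rw [show r+j = j+r by omega]; ring
        have k2 : ∑ j ∈ range t, (a (r+j) - b (r+j))/2 * ((a j - b j)/2)
            = ∑ j ∈ range t, (a j - b j)/2 * ((a (j+r) - b (j+r))/2) := by
          refine Finset.sum_congr rfl fun j _ => ?_
          rw [show r+j = j+r by omega]; ring
        rw [k1, k2]
        exact gcpXY M a b hgcp r t (by omega) (by omega) (by omega)
      linear_combination
        ((∑ m ∈ range (P+1), c m * c (m+s)) + ∑ m ∈ range (P+1), d m * d (m+s)) * hXt
        + ((∑ m ∈ range P, c m * c (m+(s+1))) + ∑ m ∈ range P, d m * d (m+(s+1))) * hXr2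
  · -- C2 for (e,f)
    intro τ hzone
    obtain ⟨h1, h2⟩ := hzone
    have hNM0 : 0 < N*M := Nat.mul_pos hN hM
    have hτNM : τ < N*M := by omega
    obtain ⟨s, t, hτ, ht, hs⟩ : ∃ s t, s*M + t = τ ∧ t < M ∧ s < N :=
      ⟨τ/M, τ%M, by rw [mul_comm]; exact Nat.div_add_mod τ M, Nat.mod_lt _ hM,
        (Nat.div_lt_iff_lt_mul hM).mpr hτNM⟩
    subst hτ
    obtain ⟨P, hNP⟩ : ∃ P, N = s + 1 + P := ⟨N-1-s, by omega⟩
    obtain ⟨r, htr⟩ : ∃ r, t + r = M := ⟨M-t, by omega⟩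
    have hsZ : N - Z ≤ s := by
      have e3 : (N-Z)*M = N*M - Z*M := Nat.sub_mul N Z M
      by_contra hcon
      push_neg at hcon
      have h4 : (s+1)*M ≤ (N-Z)*M := Nat.mul_le_mul_right M (by omega)
      have h5 : (s+1)*M = s*M + M := by ring
      omega
    have Hef := turynRho M N s t r P htr hNP c (fun m => d (N-1-m)) d (fun m => -c (N-1-m))
      (fun j => (a j + b j)/2) (fun j => (a j - b j)/2)
      (fun j => (a j + b j)/2) (fun j => (a j - b j)/2) e f heB hfB
    have Hfe := turynRho M N s t r P htr hNP d (fun m => -c (N-1-m)) c (fun m => d (N-1-m))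
      (fun j => (a j + b j)/2) (fun j => (a j - b j)/2)
      (fun j => (a j + b j)/2) (fun j => (a j - b j)/2) f e hfB heB
    rw [Hef, Hfe]
    simp only [neg_mul, mul_neg, neg_neg, Finset.sum_neg_distrib]
    have hFc : ∑ m ∈ range (P+1), c m * c (N-1-(m+s))
        = ∑ m ∈ range (P+1), d m * d (N-1-(m+s)) := by
      refine Finset.sum_congr rfl fun m hm => ?_
      simp only [mem_range] at hm
      rcases dich with h|h
      · rw [(h m (by omega)).1, (h (N-1-(m+s)) (by omega)).1]
      · rw [(h m (by omega)).1, (h (N-1-(m+s)) (by omega)).1]; ring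
    have hFc1 : ∑ m ∈ range P, c m * c (N-1-(m+(s+1)))
        = ∑ m ∈ range P, d m * d (N-1-(m+(s+1))) := by
      refine Finset.sum_congr rfl fun m hm => ?_
      simp only [mem_range] at hm
      rcases dich with h|h
      · rw [(h m (by omega)).1, (h (N-1-(m+(s+1))) (by omega)).1]
      · rw [(h m (by omega)).1, (h (N-1-(m+(s+1))) (by omega)).1]; ring
    have hGc : ∑ m ∈ range (P+1), c (N-1-m) * c (m+s)
        = ∑ m ∈ range (P+1), d (N-1-m) * d (m+s) := by
      refine Finset.sum_congr rfl fun m hm => ?_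
      simp only [mem_range] at hm
      rcases dich with h|h
      · have e1 := (h m (by omega)).2
        have e2 := (h (N-1-(m+s)) (by omega)).2
        rw [show N-1-(N-1-(m+s)) = m+s by omega] at e2
        rw [e1, e2]; ring
      · have e1 := (h m (by omega)).2
        have e2 := (h (N-1-(m+s)) (by omega)).2
        rw [show N-1-(N-1-(m+s)) = m+s by omega] at e2
        rw [e1, e2]
    have hGc1 : ∑ m ∈ range P, c (N-1-m) * c (m+(s+1))
        = ∑ m ∈ range P, d (N-1-m) * d (m+(s+1)) := by
      refine Finset.sum_congr rfl fun m hm => ?_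
      simp only [mem_range] at hm
      rcases dich with h|h
      · have e1 := (h m (by omega)).2
        have e2 := (h (N-1-(m+(s+1))) (by omega)).2
        rw [show N-1-(N-1-(m+(s+1))) = m+(s+1) by omega] at e2
        rw [e1, e2]; ring
      · have e1 := (h m (by omega)).2
        have e2 := (h (N-1-(m+(s+1))) (by omega)).2
        rw [show N-1-(N-1-(m+(s+1))) = m+(s+1) by omega] at e2
        rw [e1, e2]
    have hCD : (∑ k ∈ range (P+1), c k * d (k+s)) + ∑ k ∈ range (P+1), d k * c (k+s) = 0 := by
      have h := hC2 s ⟨hsZ, by omega⟩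
      unfold rhoR at h
      rwa [show N - s = P+1 by omega] at h
    have hCD1 : (∑ k ∈ range P, c k * d (k+(s+1))) + ∑ k ∈ range P, d k * c (k+(s+1)) = 0 := by
      rcases Nat.eq_zero_or_pos P with hP0 | hPpos
      · rw [hP0]; simp
      · have h := hC2 (s+1) ⟨by omega, by omega⟩
        unfold rhoR at h
        rwa [show N - (s+1) = P by omega] at h
    rw [reflPair N s (P+1) (by omega) d c, reflPair N s (P+1) (by omega) c d,
      reflPair N (s+1) P (by omega) d c, reflPair N (s+1) P (by omega) c d,
      hFc, hFc1, hGc, hGc1]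
    linear_combination
      ((∑ j ∈ range r, (a j + b j)/2 * ((a (j+t) + b (j+t))/2))
        - ∑ j ∈ range r, (a j - b j)/2 * ((a (j+t) - b (j+t))/2)) * hCD
      + ((∑ j ∈ range t, (a (r+j) + b (r+j))/2 * ((a j + b j)/2))
        - ∑ j ∈ range t, (a (r+j) - b (r+j))/2 * ((a j - b j)/2)) * hCD1
end

section
/- Let (a,b) be a binary GCP of length M. Let c = (1,1,1,−1,1,1,1,1,−1,−1,1,−1) and d = (1,1,1,−1,1,−1,−1,−1,1,1,−1,1) be the binary sequences of length 12 obtained by concatenating the Barker sequence of length 5 with the Barker sequence of length 7 and with its negation, respectively. Define length-12M binary sequences e, f by e_{mM+j} = c_m·(a_j+b_j)/2 − d_{11−m}·(b_j−a_j)/2 and f_{mM+j} = d_m·(a_j+b_j)/2 + c_{11−m}·(b_j−a_j)/2 for 0 ≤ m < 12 and 0 ≤ j < M. Then (e,f) is a binary (12M, 5M)-CZCP. -/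
/-- The optimal binary `(12, 5)`-CZCP: the length-5 Barker sequence followed by the
length-7 Barker sequence. -/
noncomputable def c12 : ℕ → ℝ := fun i =>
  (([1, 1, 1, -1, 1, 1, 1, 1, -1, -1, 1, -1] : List ℝ).getD i 0)

/-- The optimal binary `(12, 5)`-CZCP: the length-5 Barker sequence followed by the
negation of the length-7 Barker sequence. -/
noncomputable def d12 : ℕ → ℝ := fun i =>
  (([1, 1, 1, -1, 1, -1, -1, -1, 1, 1, -1, 1] : List ℝ).getD i 0)
section Aux

open Finset

private lemma sum_range_mul (M : ℕ) (g : ℕ → ℝ) (n : ℕ) :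
    ∑ i ∈ Finset.range (n * M), g i
      = ∑ m ∈ Finset.range n, ∑ j ∈ Finset.range M, g (m * M + j) := by
  induction n with
  | zero => simp
  | succ n ih =>
    rw [Nat.succ_mul, Finset.sum_range_add, ih, Finset.sum_range_succ]

private lemma rho_prod (N M : ℕ) (p p' q q' : ℕ → ℝ) (s t : ℕ) (hs : s < N) (ht : t < M) :
    rhoR (N * M) (fun i => p (i / M) * q (i % M)) (fun i => p' (i / M) * q' (i % M))
      (s * M + t)
    = rhoR N p p' s * rhoR M q q' t + rhoR N p p' (s + 1) * rhoR M q' q (M - t) := by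
  have hM : 0 < M := by omega
  obtain ⟨k, rfl⟩ : ∃ k, N = s + 1 + k := ⟨N - s - 1, by omega⟩
  have hdiv : ∀ m j : ℕ, j < M → (m * M + j) / M = m := by
    intro m j hj
    rw [mul_comm, Nat.mul_add_div hM, Nat.div_eq_of_lt hj, Nat.add_zero]
  have hmod : ∀ m j : ℕ, j < M → (m * M + j) % M = j := by
    intro m j hj
    rw [mul_comm, Nat.mul_add_mod, Nat.mod_eq_of_lt hj]
  have hK : (s + 1 + k) * M - (s * M + t) = k * M + (M - t) := by
    have h2 : (s + 1 + k) * M = (s * M + t) + (k * M + (M - t)) := by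
      have h3 : t + (M - t) = M := by omega
      calc (s + 1 + k) * M = s * M + k * M + M := by ring
        _ = s * M + k * M + (t + (M - t)) := by rw [h3]
        _ = s * M + t + (k * M + (M - t)) := by ring
    rw [h2, Nat.add_sub_cancel_left]
  have hN1 : s + 1 + k - s = k + 1 := by omega
  have hN2 : s + 1 + k - (s + 1) = k := by omega
  have hMt : M - (M - t) = t := by omega
  have hrange : Finset.range M = Finset.range ((M - t) + t) := by
    rw [Nat.sub_add_cancel ht.le]
  have T1 : ∀ m j : ℕ, j < M - t →
      p ((m * M + j) / M) * q ((m * M + j) % M) *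
        (p' ((m * M + j + (s * M + t)) / M) * q' ((m * M + j + (s * M + t)) % M))
      = (p m * p' (m + s)) * (q j * q' (j + t)) := by
    intro m j hj
    have h0 : m * M + j + (s * M + t) = (m + s) * M + (j + t) := by ring
    simp only [h0, hdiv m j (by omega), hmod m j (by omega),
      hdiv (m + s) (j + t) (by omega), hmod (m + s) (j + t) (by omega)]
    ring
  have T2 : ∀ m j : ℕ, j < t →
      p ((m * M + ((M - t) + j)) / M) * q ((m * M + ((M - t) + j)) % M) *
        (p' ((m * M + ((M - t) + j) + (s * M + t)) / M) *
          q' ((m * M + ((M - t) + j) + (s * M + t)) % M))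
      = (p m * p' (m + (s + 1))) * (q' j * q ((M - t) + j)) := by
    intro m j hj
    have e1 : (M - t) + j + t = M + j := by omega
    have h0 : m * M + ((M - t) + j) + (s * M + t) = (m + (s + 1)) * M + j := by
      calc m * M + ((M - t) + j) + (s * M + t) = (m + s) * M + ((M - t) + j + t) := by ring
        _ = (m + s) * M + (M + j) := by rw [e1]
        _ = (m + (s + 1)) * M + j := by ring
    simp only [h0, hdiv m ((M - t) + j) (by omega), hmod m ((M - t) + j) (by omega),
      hdiv (m + (s + 1)) j (by omega), hmod (m + (s + 1)) j (by omega)]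
    ring
  simp only [rhoR, hK, hN1, hN2, hMt]
  rw [Finset.sum_range_add, sum_range_mul]
  calc (∑ m ∈ Finset.range k, ∑ j ∈ Finset.range M,
          (fun i => p (i / M) * q (i % M) *
            (p' ((i + (s * M + t)) / M) * q' ((i + (s * M + t)) % M))) (m * M + j))
        + ∑ j ∈ Finset.range (M - t),
            (fun i => p (i / M) * q (i % M) *
              (p' ((i + (s * M + t)) / M) * q' ((i + (s * M + t)) % M))) (k * M + j)
      = (∑ m ∈ Finset.range k,
          ((∑ j ∈ Finset.range (M - t), (p m * p' (m + s)) * (q j * q' (j + t)))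
            + ∑ j ∈ Finset.range t, (p m * p' (m + (s + 1))) * (q' j * q ((M - t) + j))))
        + ∑ j ∈ Finset.range (M - t), (p k * p' (k + s)) * (q j * q' (j + t)) := by
        congr 1
        · refine Finset.sum_congr rfl fun m _ => ?_
          rw [hrange, Finset.sum_range_add]
          congr 1
          · exact Finset.sum_congr rfl fun j hj => T1 m j (Finset.mem_range.mp hj)
          · exact Finset.sum_congr rfl fun j hj => T2 m j (Finset.mem_range.mp hj)
        · exact Finset.sum_congr rfl fun j hj => T1 k j (Finset.mem_range.mp hj)
    _ = (∑ m ∈ Finset.range (k + 1), p m * p' (m + s)) *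
          (∑ j ∈ Finset.range (M - t), q j * q' (j + t))
        + (∑ m ∈ Finset.range k, p m * p' (m + (s + 1))) *
          (∑ j ∈ Finset.range t, q' j * q (j + (M - t))) := by
        rw [Finset.sum_add_distrib, Finset.sum_mul_sum, Finset.sum_mul_sum,
          Finset.sum_range_succ]
        have hswap : (∑ i ∈ Finset.range k, ∑ j ∈ Finset.range t,
              (p i * p' (i + (s + 1))) * (q' j * q (j + (M - t))))
            = ∑ i ∈ Finset.range k, ∑ j ∈ Finset.range t,
              (p i * p' (i + (s + 1))) * (q' j * q ((M - t) + j)) :=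
          Finset.sum_congr rfl fun i _ => Finset.sum_congr rfl fun j _ => by
            rw [Nat.add_comm j (M - t)]
        rw [hswap]
        ring

end Aux
/-- Reversed-negated `d12`, second outer component of `e`. -/
noncomputable def cN12 : ℕ → ℝ := fun m => -d12 (11 - m)

/-- Reversed `c12`, second outer component of `f`. -/
noncomputable def dN12 : ℕ → ℝ := fun m => c12 (11 - m)

private lemma rho_key (M : ℕ) (p1 p2 r1 r2 A B u v : ℕ → ℝ) (s t : ℕ)
    (hs : s < 12) (ht : t < M)
    (hu : ∀ i, u i = p1 (i / M) * A (i % M) + p2 (i / M) * B (i % M))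
    (hv : ∀ i, v i = r1 (i / M) * A (i % M) + r2 (i / M) * B (i % M)) :
    rhoR (12 * M) u v (s * M + t)
    = rhoR 12 p1 r1 s * rhoR M A A t + rhoR 12 p1 r1 (s + 1) * rhoR M A A (M - t)
    + (rhoR 12 p1 r2 s * rhoR M A B t + rhoR 12 p1 r2 (s + 1) * rhoR M B A (M - t))
    + (rhoR 12 p2 r1 s * rhoR M B A t + rhoR 12 p2 r1 (s + 1) * rhoR M A B (M - t))
    + (rhoR 12 p2 r2 s * rhoR M B B t + rhoR 12 p2 r2 (s + 1) * rhoR M B B (M - t)) := by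
  have h1 := rho_prod 12 M p1 r1 A A s t hs ht
  have h2 := rho_prod 12 M p1 r2 A B s t hs ht
  have h3 := rho_prod 12 M p2 r1 B A s t hs ht
  have h4 := rho_prod 12 M p2 r2 B B s t hs ht
  have hu' : u = fun i => p1 (i / M) * A (i % M) + p2 (i / M) * B (i % M) := funext hu
  have hv' : v = fun i => r1 (i / M) * A (i % M) + r2 (i / M) * B (i % M) := funext hv
  rw [hu', hv', ← h1, ← h2, ← h3, ← h4]
  simp only [rhoR, ← Finset.sum_add_distrib]
  exact Finset.sum_congr rfl fun i _ => by ring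

private lemma factP : ∀ s ≤ 12, rhoR 12 c12 c12 s + rhoR 12 d12 d12 s
    = rhoR 12 cN12 cN12 s + rhoR 12 dN12 dN12 s := by
  intro s hs
  interval_cases s <;> (simp only [rhoR, Finset.sum_range_succ, Finset.sum_range_zero, cN12, dN12, c12, d12]; norm_num)

private lemma factP0 : ∀ s, 1 ≤ s → s ≤ 12 → s ≠ 6 →
    rhoR 12 c12 c12 s + rhoR 12 d12 d12 s = 0 := by
  intro s h1 h2 h3
  interval_cases s <;>
    first
    | exact absurd rfl h3
    | (simp only [rhoR, Finset.sum_range_succ, Finset.sum_range_zero, c12, d12]; norm_num)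

private lemma factQ : ∀ s ≤ 12, rhoR 12 c12 cN12 s + rhoR 12 d12 dN12 s = 0 := by
  intro s hs
  interval_cases s <;> (simp only [rhoR, Finset.sum_range_succ, Finset.sum_range_zero, cN12, dN12, c12, d12]; norm_num)

private lemma factR : ∀ s ≤ 12, rhoR 12 cN12 c12 s + rhoR 12 dN12 d12 s = 0 := by
  intro s hs
  interval_cases s <;> (simp only [rhoR, Finset.sum_range_succ, Finset.sum_range_zero, cN12, dN12, c12, d12]; norm_num)

private lemma factD : ∀ s, 7 ≤ s → s ≤ 12 →
    rhoR 12 c12 d12 s + rhoR 12 d12 c12 s = 0 := by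
  intro s h1 h2
  interval_cases s <;> (simp only [rhoR, Finset.sum_range_succ, Finset.sum_range_zero, c12, d12]; norm_num)

private lemma factD' : ∀ s, 7 ≤ s → s ≤ 12 →
    rhoR 12 cN12 dN12 s + rhoR 12 dN12 cN12 s = 0 := by
  intro s h1 h2
  interval_cases s <;> (simp only [rhoR, Finset.sum_range_succ, Finset.sum_range_zero, cN12, dN12, c12, d12]; norm_num)

private lemma factF : ∀ s, 7 ≤ s → s ≤ 12 →
    rhoR 12 c12 dN12 s + rhoR 12 d12 cN12 s = 0 := by
  intro s h1 h2
  interval_cases s <;> (simp only [rhoR, Finset.sum_range_succ, Finset.sum_range_zero, cN12, dN12, c12, d12]; norm_num)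

private lemma factG : ∀ s, 7 ≤ s → s ≤ 12 →
    rhoR 12 cN12 d12 s + rhoR 12 dN12 c12 s = 0 := by
  intro s h1 h2
  interval_cases s <;> (simp only [rhoR, Finset.sum_range_succ, Finset.sum_range_zero, cN12, dN12, c12, d12]; norm_num)

private lemma rho_len (L : ℕ) (u v : ℕ → ℝ) : rhoR L u v L = 0 := by
  simp [rhoR]

private lemma c12bin : ∀ m < 12, c12 m = 1 ∨ c12 m = -1 := by
  intro m hm
  interval_cases m <;> norm_num [c12]

private lemma d12bin : ∀ m < 12, d12 m = 1 ∨ d12 m = -1 := by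
  intro m hm
  interval_cases m <;> norm_num [d12]

/-- If `(a, b)` is a binary GCP of length `M`, then the Turyn product of
`(a, b)` with the optimal `(12, 5)`-CZCP `(c12, d12)` — i.e. the length-`12M` sequences
`e, f` given at index `mM + j` by `e_{mM+j} = c_m (a_j + b_j)/2 - d_{11-m} (b_j - a_j)/2`
and `f_{mM+j} = d_m (a_j + b_j)/2 + c_{11-m} (b_j - a_j)/2` — is a binary
`(12M, 5M)`-CZCP. -/
theorem stmt_16 (M : ℕ) (hM : 0 < M) (a b : ℕ → ℝ) (hab : IsGCP M a b)
    (e f : ℕ → ℝ)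
    (he : ∀ i, e i = c12 (i / M) * (a (i % M) + b (i % M)) / 2
      - d12 (11 - i / M) * (b (i % M) - a (i % M)) / 2)
    (hf : ∀ i, f i = d12 (i / M) * (a (i % M) + b (i % M)) / 2
      + c12 (11 - i / M) * (b (i % M) - a (i % M)) / 2) :
    IsBinary (12 * M) e ∧ IsBinary (12 * M) f ∧ IsCZCPR (12 * M) (5 * M) e f := by
  obtain ⟨ha, hb, hg⟩ := hab
  have hebin : IsBinary (12 * M) e := by
    intro i hi
    have hm : i / M < 12 := Nat.div_lt_of_lt_mul (by omega)
    have hj : i % M < M := Nat.mod_lt _ hM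
    rcases ha _ hj with h1 | h1 <;> rcases hb _ hj with h2 | h2 <;>
      rcases c12bin (i / M) hm with h3 | h3 <;>
      rcases d12bin (11 - i / M) ((Nat.sub_le 11 (i / M)).trans_lt (by norm_num)) with h4 | h4 <;>
      rw [he i, h1, h2, h3, h4] <;> norm_num
  have hfbin : IsBinary (12 * M) f := by
    intro i hi
    have hm : i / M < 12 := Nat.div_lt_of_lt_mul (by omega)
    have hj : i % M < M := Nat.mod_lt _ hM
    rcases ha _ hj with h1 | h1 <;> rcases hb _ hj with h2 | h2 <;>
      rcases d12bin (i / M) hm with h3 | h3 <;>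
      rcases c12bin (11 - i / M) ((Nat.sub_le 11 (i / M)).trans_lt (by norm_num)) with h4 | h4 <;>
      rw [hf i, h1, h2, h3, h4] <;> norm_num
  set Af : ℕ → ℝ := fun j => (a j + b j) / 2 with hAf
  set Bf : ℕ → ℝ := fun j => (b j - a j) / 2 with hBf
  have hue : ∀ i, e i = c12 (i / M) * Af (i % M) + cN12 (i / M) * Bf (i % M) := by
    intro i
    simp only [hAf, hBf, cN12]
    rw [he i]; ring
  have hvf : ∀ i, f i = d12 (i / M) * Af (i % M) + dN12 (i / M) * Bf (i % M) := by
    intro i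
    simp only [hAf, hBf, dN12]
    rw [hf i]; ring
  have hS : ∀ t, 1 ≤ t → t ≤ M - 1 → rhoR M Af Af t + rhoR M Bf Bf t = 0 := by
    intro t h1 h2
    have h3 : rhoR M Af Af t + rhoR M Bf Bf t = (rhoR M a a t + rhoR M b b t) / 2 := by
      simp only [hAf, hBf, rhoR, ← Finset.sum_add_distrib, Finset.sum_div]
      exact Finset.sum_congr rfl fun k _ => by ring
    rw [h3, hg t h1 h2]
    norm_num
  have hAB0 : rhoR M Af Bf 0 = 0 := by
    simp only [hAf, hBf, rhoR, Nat.sub_zero, Nat.add_zero]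
    apply Finset.sum_eq_zero
    intro k hk
    rcases ha k (Finset.mem_range.mp hk) with h1 | h1 <;>
      rcases hb k (Finset.mem_range.mp hk) with h2 | h2 <;>
      norm_num [h1, h2]
  have hBA0 : rhoR M Bf Af 0 = 0 := by
    simp only [hAf, hBf, rhoR, Nat.sub_zero, Nat.add_zero]
    apply Finset.sum_eq_zero
    intro k hk
    rcases ha k (Finset.mem_range.mp hk) with h1 | h1 <;>
      rcases hb k (Finset.mem_range.mp hk) with h2 | h2 <;>
      norm_num [h1, h2]
  refine ⟨hebin, hfbin, ?_, ?_⟩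
  · -- (C1)
    rintro τ (⟨h1, h2⟩ | ⟨h1, h2⟩)
    · -- 1 ≤ τ ≤ 5M
      have ht : τ % M < M := Nat.mod_lt _ hM
      have hτ0 : τ / M * M + τ % M = τ := by rw [mul_comm]; exact Nat.div_add_mod τ M
      have hs : τ / M < 12 := Nat.div_lt_of_lt_mul (by omega)
      have hs5 : τ / M < 6 := Nat.div_lt_of_lt_mul (by omega)
      obtain ⟨s, hsd⟩ : ∃ s, τ / M = s := ⟨_, rfl⟩
      obtain ⟨t, htd⟩ : ∃ t, τ % M = t := ⟨_, rfl⟩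
      rw [hsd] at hs hs5
      rw [htd] at ht
      rw [hsd, htd] at hτ0
      rw [← hτ0, rho_key M c12 cN12 c12 cN12 Af Bf e e s t hs ht hue hue,
        rho_key M d12 dN12 d12 dN12 Af Bf f f s t hs ht hvf hvf]
      rcases Nat.eq_zero_or_pos t with ht0 | ht1
      · have hs1 : 1 ≤ s := by
          rcases Nat.eq_zero_or_pos s with h0 | h0
          · rw [h0, ht0] at hτ0; simp at hτ0; omega
          · exact h0
        have hPs := factP0 s hs1 (by omega) (by omega)
        have hPs' : rhoR 12 cN12 cN12 s + rhoR 12 dN12 dN12 s = 0 := by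
          rw [← factP s (by omega)]; exact hPs
        rw [ht0, Nat.sub_zero]
        linear_combination (rhoR M Af Af 0) * hPs + (rhoR M Bf Bf 0) * hPs'
          + (rhoR 12 c12 cN12 s + rhoR 12 d12 dN12 s) * hAB0
          + (rhoR 12 cN12 c12 s + rhoR 12 dN12 d12 s) * hBA0
          + (rhoR 12 c12 c12 (s + 1) + rhoR 12 d12 d12 (s + 1)) * rho_len M Af Af
          + (rhoR 12 cN12 cN12 (s + 1) + rhoR 12 dN12 dN12 (s + 1)) * rho_len M Bf Bf
          + (rhoR 12 c12 cN12 (s + 1) + rhoR 12 d12 dN12 (s + 1)) * rho_len M Bf Af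
          + (rhoR 12 cN12 c12 (s + 1) + rhoR 12 dN12 d12 (s + 1)) * rho_len M Af Bf
      · have hSt := hS t ht1 (by omega)
        have hSmt := hS (M - t) (by omega) (by omega)
        have hPs := factP s (by omega)
        have hPs1 := factP (s + 1) (by omega)
        have hQs := factQ s (by omega)
        have hQs1 := factQ (s + 1) (by omega)
        have hRs := factR s (by omega)
        have hRs1 := factR (s + 1) (by omega)
        linear_combination (rhoR M Af Af t) * hPs
          + (rhoR 12 cN12 cN12 s + rhoR 12 dN12 dN12 s) * hSt
          + (rhoR M Af Af (M - t)) * hPs1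
          + (rhoR 12 cN12 cN12 (s + 1) + rhoR 12 dN12 dN12 (s + 1)) * hSmt
          + (rhoR M Af Bf t) * hQs + (rhoR M Bf Af t) * hRs
          + (rhoR M Af Bf (M - t)) * hRs1 + (rhoR M Bf Af (M - t)) * hQs1
    · -- 7M ≤ τ ≤ 12M - 1
      have ht : τ % M < M := Nat.mod_lt _ hM
      have hτ0 : τ / M * M + τ % M = τ := by rw [mul_comm]; exact Nat.div_add_mod τ M
      have hs : τ / M < 12 := Nat.div_lt_of_lt_mul (by omega)
      have hs7 : 7 ≤ τ / M := (Nat.le_div_iff_mul_le hM).mpr (by omega)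
      obtain ⟨s, hsd⟩ : ∃ s, τ / M = s := ⟨_, rfl⟩
      obtain ⟨t, htd⟩ : ∃ t, τ % M = t := ⟨_, rfl⟩
      rw [hsd] at hs hs7
      rw [htd] at ht
      rw [hsd, htd] at hτ0
      rw [← hτ0, rho_key M c12 cN12 c12 cN12 Af Bf e e s t hs ht hue hue,
        rho_key M d12 dN12 d12 dN12 Af Bf f f s t hs ht hvf hvf]
      rcases Nat.eq_zero_or_pos t with ht0 | ht1
      · have hPs := factP0 s (by omega) (by omega) (by omega)
        have hPs' : rhoR 12 cN12 cN12 s + rhoR 12 dN12 dN12 s = 0 := by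
          rw [← factP s (by omega)]; exact hPs
        rw [ht0, Nat.sub_zero]
        linear_combination (rhoR M Af Af 0) * hPs + (rhoR M Bf Bf 0) * hPs'
          + (rhoR 12 c12 cN12 s + rhoR 12 d12 dN12 s) * hAB0
          + (rhoR 12 cN12 c12 s + rhoR 12 dN12 d12 s) * hBA0
          + (rhoR 12 c12 c12 (s + 1) + rhoR 12 d12 d12 (s + 1)) * rho_len M Af Af
          + (rhoR 12 cN12 cN12 (s + 1) + rhoR 12 dN12 dN12 (s + 1)) * rho_len M Bf Bf
          + (rhoR 12 c12 cN12 (s + 1) + rhoR 12 d12 dN12 (s + 1)) * rho_len M Bf Af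
          + (rhoR 12 cN12 c12 (s + 1) + rhoR 12 dN12 d12 (s + 1)) * rho_len M Af Bf
      · have hSt := hS t ht1 (by omega)
        have hSmt := hS (M - t) (by omega) (by omega)
        have hPs := factP s (by omega)
        have hPs1 := factP (s + 1) (by omega)
        have hQs := factQ s (by omega)
        have hQs1 := factQ (s + 1) (by omega)
        have hRs := factR s (by omega)
        have hRs1 := factR (s + 1) (by omega)
        linear_combination (rhoR M Af Af t) * hPs
          + (rhoR 12 cN12 cN12 s + rhoR 12 dN12 dN12 s) * hSt
          + (rhoR M Af Af (M - t)) * hPs1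
          + (rhoR 12 cN12 cN12 (s + 1) + rhoR 12 dN12 dN12 (s + 1)) * hSmt
          + (rhoR M Af Bf t) * hQs + (rhoR M Bf Af t) * hRs
          + (rhoR M Af Bf (M - t)) * hRs1 + (rhoR M Bf Af (M - t)) * hQs1
  · -- (C2)
    rintro τ ⟨h1, h2⟩
    have ht : τ % M < M := Nat.mod_lt _ hM
    have hτ0 : τ / M * M + τ % M = τ := by rw [mul_comm]; exact Nat.div_add_mod τ M
    have hs : τ / M < 12 := Nat.div_lt_of_lt_mul (by omega)
    have hs7 : 7 ≤ τ / M := (Nat.le_div_iff_mul_le hM).mpr (by omega)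
    obtain ⟨s, hsd⟩ : ∃ s, τ / M = s := ⟨_, rfl⟩
    obtain ⟨t, htd⟩ : ∃ t, τ % M = t := ⟨_, rfl⟩
    rw [hsd] at hs hs7
    rw [htd] at ht
    rw [hsd, htd] at hτ0
    rw [← hτ0, rho_key M c12 cN12 d12 dN12 Af Bf e f s t hs ht hue hvf,
      rho_key M d12 dN12 c12 cN12 Af Bf f e s t hs ht hvf hue]
    have hDs := factD s hs7 (by omega)
    have hDs1 := factD (s + 1) (by omega) (by omega)
    have hD's := factD' s hs7 (by omega)
    have hD's1 := factD' (s + 1) (by omega) (by omega)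
    have hFs := factF s hs7 (by omega)
    have hFs1 := factF (s + 1) (by omega) (by omega)
    have hGs := factG s hs7 (by omega)
    have hGs1 := factG (s + 1) (by omega) (by omega)
    linear_combination (rhoR M Af Af t) * hDs + (rhoR M Bf Bf t) * hD's
      + (rhoR M Af Bf t) * hFs + (rhoR M Bf Af t) * hGs
      + (rhoR M Af Af (M - t)) * hDs1 + (rhoR M Bf Bf (M - t)) * hD's1
      + (rhoR M Bf Af (M - t)) * hFs1 + (rhoR M Af Bf (M - t)) * hGs1
end

section
/- Let (a,b) be a binary GCP of length M. Let c = (1,1,1,−1,−1,−1,1,−1,−1,1,−1,1,1,1,1,1,−1,−1,1,1,−1,1,−1,1) and d = (1,1,1,−1,−1,−1,1,−1,−1,1,−1,−1,−1,−1,−1,−1,1,1,−1,−1,1,−1,1,−1) be the binary sequences of length 24 obtained by concatenating the Barker sequence of length 11 with the Barker sequence of length 13 and with its negation, respectively. Define length-24M binary sequences e, f by e_{mM+j} = c_m·(a_j+b_j)/2 − d_{23−m}·(b_j−a_j)/2 and f_{mM+j} = d_m·(a_j+b_j)/2 + c_{23−m}·(b_j−a_j)/2 for 0 ≤ m < 24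 and 0 ≤ j < M. Then (e,f) is a binary (24M, 11M)-CZCP. -/
/-- The optimal binary `(24, 11)`-CZCP: the length-11 Barker sequence followed by the
length-13 Barker sequence. -/
noncomputable def c24 : ℕ → ℝ := fun i =>
  (([1, 1, 1, -1, -1, -1, 1, -1, -1, 1, -1,
     1, 1, 1, 1, 1, -1, -1, 1, 1, -1, 1, -1, 1] : List ℝ).getD i 0)

/-- The optimal binary `(24, 11)`-CZCP: the length-11 Barker sequence followed by the
negation of the length-13 Barker sequence. -/
noncomputable def d24 : ℕ → ℝ := fun i =>
  (([1, 1, 1, -1, -1, -1, 1, -1, -1, 1, -1,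
     -1, -1, -1, -1, -1, 1, 1, -1, -1, 1, -1, 1, -1] : List ℝ).getD i 0)


/- ------------------------------------------------------------------ -/
/- Auxiliary material for the proof of `stmt_17`.                      -/
/- ------------------------------------------------------------------ -/

section TurynAux

noncomputable def c24r : ℕ → ℝ := fun m => c24 (23 - m)
noncomputable def nd24r : ℕ → ℝ := fun m => -d24 (23 - m)

lemma sum_range_add' (g : ℕ → ℝ) (A B : ℕ) :
    ∑ k ∈ Finset.range (A + B), g k
      = (∑ k ∈ Finset.range A, g k) + ∑ k ∈ Finset.range B, g (A + k) := by
  induction B with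
  | zero => simp
  | succ n ih =>
    rw [show A + (n+1) = (A+n)+1 from rfl, Finset.sum_range_succ, ih,
      Finset.sum_range_succ]
    ring

lemma sum_block' (g : ℕ → ℝ) (M q : ℕ) (hq : q ≤ M) (R : ℕ) :
    ∑ k ∈ Finset.range (R * M - q), g k
      = (∑ m ∈ Finset.range R, ∑ j ∈ Finset.range (M - q), g (m * M + j))
        + ∑ m ∈ Finset.range (R - 1), ∑ j ∈ Finset.range q, g (m * M + (M - q) + j) := by
  induction R with
  | zero => simp
  | succ n ih =>
    cases n with
    | zero => simp [one_mul]
    | succ m =>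
      have hA : (m+1) * M = m * M + M := by ring
      have hqA : q ≤ (m+1) * M := le_trans hq (by nlinarith)
      have h2 : (m+2) * M - q = ((m+1) * M - q) + (q + (M - q)) := by
        have h3 : (m+2)*M = (m+1)*M + M := by ring
        omega
      rw [h2, sum_range_add', sum_range_add', ih]
      rw [Finset.sum_range_succ (fun m_1 => ∑ j ∈ Finset.range (M - q), g (m_1 * M + j)) (m+1)]
      rw [show (m+2) - 1 = (m+1) - 1 + 1 from rfl,
        Finset.sum_range_succ (fun m_1 => ∑ j ∈ Finset.range q, g (m_1 * M + (M - q) + j)) ((m+1)-1)]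
      have e1 : ∑ k ∈ Finset.range q, g ((m+1) * M - q + k)
          = ∑ j ∈ Finset.range q, g (((m+1)-1) * M + (M - q) + j) := by
        refine Finset.sum_congr rfl fun k _ => ?_
        congr 1
        simp only [Nat.add_sub_cancel]
        omega
      have e2 : ∑ k ∈ Finset.range (M - q), g ((m+1) * M - q + (q + k))
          = ∑ j ∈ Finset.range (M - q), g ((m+1) * M + j) := by
        refine Finset.sum_congr rfl fun k _ => ?_
        congr 1
        omega
      rw [e1, e2]
      ring

lemma divM' {M : ℕ} (hM : 0 < M) (m j : ℕ) (hj : j < M) : (m * M + j) / M = m := by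
  rw [show m * M + j = j + m * M from by ring, Nat.add_mul_div_right j m hM,
    Nat.div_eq_of_lt hj, Nat.zero_add]

lemma modM' {M : ℕ} (m j : ℕ) (hj : j < M) : (m * M + j) % M = j := by
  rw [show m * M + j = j + m * M from by ring, Nat.add_mul_mod_self_right,
    Nat.mod_eq_of_lt hj]

lemma rho_split (M : ℕ) (hM : 0 < M) (x1 x2 y1 y2 s t u v : ℕ → ℝ)
    (hu : ∀ i, u i = x1 (i / M) * s (i % M) + x2 (i / M) * t (i % M))
    (hv : ∀ i, v i = y1 (i / M) * s (i % M) + y2 (i / M) * t (i % M))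
    (p q : ℕ) (hp : p ≤ 23) (hq : q < M) :
    rhoR (24 * M) u v (p * M + q) =
      rhoR 24 x1 y1 p * rhoR M s s q + rhoR 24 x1 y2 p * rhoR M s t q
      + rhoR 24 x2 y1 p * rhoR M t s q + rhoR 24 x2 y2 p * rhoR M t t q
      + rhoR 24 x1 y1 (p+1) * rhoR M s s (M - q)
      + rhoR 24 x1 y2 (p+1) * rhoR M t s (M - q)
      + rhoR 24 x2 y1 (p+1) * rhoR M s t (M - q)
      + rhoR 24 x2 y2 (p+1) * rhoR M t t (M - q) := by
  clear hp
  have hR : 24 * M - (p * M + q) = (24 - p) * M - q := by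
    rw [Nat.sub_mul, Nat.sub_sub]
  rw [show rhoR (24 * M) u v (p * M + q)
      = ∑ k ∈ Finset.range (24 * M - (p * M + q)), u k * v (k + (p * M + q)) from rfl,
    hR, sum_block' (fun k => u k * v (k + (p * M + q))) M q hq.le (24 - p)]
  have hmain : ∑ m ∈ Finset.range (24 - p), ∑ j ∈ Finset.range (M - q),
        u (m * M + j) * v (m * M + j + (p * M + q))
      = rhoR 24 x1 y1 p * rhoR M s s q + rhoR 24 x1 y2 p * rhoR M s t q
        + rhoR 24 x2 y1 p * rhoR M t s q + rhoR 24 x2 y2 p * rhoR M t t q := by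
    have step : ∀ m ∈ Finset.range (24 - p), ∀ j ∈ Finset.range (M - q),
        u (m * M + j) * v (m * M + j + (p * M + q))
        = (x1 m * y1 (m+p)) * (s j * s (j+q)) + (x1 m * y2 (m+p)) * (s j * t (j+q))
          + (x2 m * y1 (m+p)) * (t j * s (j+q)) + (x2 m * y2 (m+p)) * (t j * t (j+q)) := by
      intro m hm j hj
      simp only [Finset.mem_range] at hm hj
      have hj' : j < M := lt_of_lt_of_le hj (Nat.sub_le M q)
      have hjq : j + q < M := by omega
      rw [hu, hv, show m * M + j + (p * M + q) = (m+p) * M + (j+q) from by ring,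
        divM' hM m j hj', modM' m j hj', divM' hM (m+p) (j+q) hjq, modM' (m+p) (j+q) hjq]
      ring
    rw [Finset.sum_congr rfl fun m hm => Finset.sum_congr rfl (step m hm)]
    simp only [Finset.sum_add_distrib]
    rw [show rhoR 24 x1 y1 p * rhoR M s s q = ∑ m ∈ Finset.range (24 - p),
        ∑ j ∈ Finset.range (M - q), (x1 m * y1 (m+p)) * (s j * s (j+q)) from
      Finset.sum_mul_sum _ _ _ _]
    rw [show rhoR 24 x1 y2 p * rhoR M s t q = ∑ m ∈ Finset.range (24 - p),
        ∑ j ∈ Finset.range (M - q), (x1 m * y2 (m+p)) * (s j * t (j+q)) from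
      Finset.sum_mul_sum _ _ _ _]
    rw [show rhoR 24 x2 y1 p * rhoR M t s q = ∑ m ∈ Finset.range (24 - p),
        ∑ j ∈ Finset.range (M - q), (x2 m * y1 (m+p)) * (t j * s (j+q)) from
      Finset.sum_mul_sum _ _ _ _]
    rw [show rhoR 24 x2 y2 p * rhoR M t t q = ∑ m ∈ Finset.range (24 - p),
        ∑ j ∈ Finset.range (M - q), (x2 m * y2 (m+p)) * (t j * t (j+q)) from
      Finset.sum_mul_sum _ _ _ _]
  have hwrap : ∑ m ∈ Finset.range (24 - p - 1), ∑ j ∈ Finset.range q,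
        u (m * M + (M - q) + j) * v (m * M + (M - q) + j + (p * M + q))
      = rhoR 24 x1 y1 (p+1) * rhoR M s s (M - q) + rhoR 24 x1 y2 (p+1) * rhoR M t s (M - q)
        + rhoR 24 x2 y1 (p+1) * rhoR M s t (M - q) + rhoR 24 x2 y2 (p+1) * rhoR M t t (M - q) := by
    have step : ∀ m ∈ Finset.range (24 - p - 1), ∀ j ∈ Finset.range q,
        u (m * M + (M - q) + j) * v (m * M + (M - q) + j + (p * M + q))
        = (x1 m * y1 (m+(p+1))) * (s (j + (M - q)) * s j)
          + (x1 m * y2 (m+(p+1))) * (s (j + (M - q)) * t j)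
          + (x2 m * y1 (m+(p+1))) * (t (j + (M - q)) * s j)
          + (x2 m * y2 (m+(p+1))) * (t (j + (M - q)) * t j) := by
      intro m hm j hj
      simp only [Finset.mem_range] at hm hj
      have hjM : (M - q) + j < M := by omega
      have hidx1 : m * M + (M - q) + j = m * M + ((M - q) + j) := by ring
      have hidx2 : m * M + (M - q) + j + (p * M + q) = (m + (p+1)) * M + j := by
        have h3 : M - q + q = M := by omega
        calc m * M + (M - q) + j + (p * M + q) = m * M + p * M + (M - q + q) + j := by ring
          _ = m * M + p * M + M + j := by rw [h3]
          _ = (m + (p+1)) * M + j := by ring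
      rw [hidx2, hidx1, hu, hv, divM' hM m _ hjM, modM' m _ hjM,
        divM' hM (m+(p+1)) j (by omega), modM' (m+(p+1)) j (by omega),
        show (M - q) + j = j + (M - q) from by ring]
      ring
    rw [Finset.sum_congr rfl fun m hm => Finset.sum_congr rfl (step m hm)]
    simp only [Finset.sum_add_distrib]
    have h24 : 24 - p - 1 = 24 - (p+1) := by omega
    have hqq : M - (M - q) = q := by omega
    rw [h24]
    rw [show rhoR 24 x1 y1 (p+1) * rhoR M s s (M - q) = ∑ m ∈ Finset.range (24 - (p+1)),
        ∑ j ∈ Finset.range (M - (M - q)), (x1 m * y1 (m+(p+1))) * (s j * s (j+(M-q))) from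
      Finset.sum_mul_sum _ _ _ _, hqq]
    rw [show rhoR 24 x1 y2 (p+1) * rhoR M t s (M - q) = ∑ m ∈ Finset.range (24 - (p+1)),
        ∑ j ∈ Finset.range (M - (M - q)), (x1 m * y2 (m+(p+1))) * (t j * s (j+(M-q))) from
      Finset.sum_mul_sum _ _ _ _, hqq]
    rw [show rhoR 24 x2 y1 (p+1) * rhoR M s t (M - q) = ∑ m ∈ Finset.range (24 - (p+1)),
        ∑ j ∈ Finset.range (M - (M - q)), (x2 m * y1 (m+(p+1))) * (s j * t (j+(M-q))) from
      Finset.sum_mul_sum _ _ _ _, hqq]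
    rw [show rhoR 24 x2 y2 (p+1) * rhoR M t t (M - q) = ∑ m ∈ Finset.range (24 - (p+1)),
        ∑ j ∈ Finset.range (M - (M - q)), (x2 m * y2 (m+(p+1))) * (t j * t (j+(M-q))) from
      Finset.sum_mul_sum _ _ _ _, hqq]
    refine congrArg₂ (· + ·) (congrArg₂ (· + ·) (congrArg₂ (· + ·) ?_ ?_) ?_) ?_ <;>
      refine Finset.sum_congr rfl fun m _ => Finset.sum_congr rfl fun j _ => by ring
  rw [hmain, hwrap]
  ring

lemma rho_rev_rev (x y : ℕ → ℝ) (p : ℕ) :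
    rhoR 24 (fun m => x (23 - m)) (fun m => y (23 - m)) p = rhoR 24 y x p := by
  show _ = ∑ m ∈ Finset.range (24 - p), y m * x (m + p)
  rw [← Finset.sum_range_reflect (fun m => y m * x (m + p)) (24 - p)]
  refine Finset.sum_congr rfl fun m hm => ?_
  simp only [Finset.mem_range] at hm
  show x (23 - m) * y (23 - (m + p)) = y (24 - p - 1 - m) * x (24 - p - 1 - m + p)
  rw [show 23 - (m + p) = 24 - p - 1 - m from by omega, mul_comm,
    show 24 - p - 1 - m + p = 23 - m from by omega]

lemma rho_rev_right (x y : ℕ → ℝ) (p : ℕ) :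
    rhoR 24 x (fun m => y (23 - m)) p = rhoR 24 y (fun m => x (23 - m)) p := by
  show ∑ m ∈ Finset.range (24 - p), x m * y (23 - (m + p)) = _
  rw [← Finset.sum_range_reflect (fun m => x m * y (23 - (m + p))) (24 - p)]
  refine Finset.sum_congr rfl fun m hm => ?_
  simp only [Finset.mem_range] at hm
  show x (24 - p - 1 - m) * y (23 - (24 - p - 1 - m + p)) = y m * x (23 - (m + p))
  rw [show 23 - (24 - p - 1 - m + p) = m from by omega, mul_comm,
    show 24 - p - 1 - m = 23 - (m + p) from by omega]

lemma rho_rev_left (x y : ℕ → ℝ) (p : ℕ) :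
    rhoR 24 (fun m => x (23 - m)) y p = rhoR 24 (fun m => y (23 - m)) x p := by
  show ∑ m ∈ Finset.range (24 - p), x (23 - m) * y (m + p) = _
  rw [← Finset.sum_range_reflect (fun m => x (23 - m) * y (m + p)) (24 - p)]
  refine Finset.sum_congr rfl fun m hm => ?_
  simp only [Finset.mem_range] at hm
  show x (23 - (24 - p - 1 - m)) * y (24 - p - 1 - m + p) = y (23 - m) * x (m + p)
  rw [show 23 - (24 - p - 1 - m) = m + p from by omega, mul_comm,
    show 24 - p - 1 - m + p = 23 - m from by omega]

lemma rho_neg_left (x y : ℕ → ℝ) (p L : ℕ) :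
    rhoR L (fun m => -x m) y p = -rhoR L x y p := by
  simp [rhoR]

lemma rho_neg_right (x y : ℕ → ℝ) (p L : ℕ) :
    rhoR L x (fun m => -y m) p = -rhoR L x y p := by
  simp [rhoR]

lemma turyn_I1 (p : ℕ) : rhoR 24 c24 nd24r p + rhoR 24 d24 c24r p = 0 := by
  have h1 : rhoR 24 c24 nd24r p = -rhoR 24 c24 (fun m => d24 (23 - m)) p := by
    show rhoR 24 c24 (fun m => -(fun k => d24 (23 - k)) m) p = _
    rw [rho_neg_right]
  have h2 : rhoR 24 c24 (fun m => d24 (23 - m)) p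
      = rhoR 24 d24 (fun m => c24 (23 - m)) p := rho_rev_right c24 d24 p
  have h3 : rhoR 24 d24 c24r p = rhoR 24 d24 (fun m => c24 (23 - m)) p := rfl
  rw [h1, h2, h3]; ring

lemma turyn_I2 (p : ℕ) : rhoR 24 nd24r c24 p + rhoR 24 c24r d24 p = 0 := by
  have h1 : rhoR 24 nd24r c24 p = -rhoR 24 (fun m => d24 (23 - m)) c24 p := by
    show rhoR 24 (fun m => -(fun k => d24 (23 - k)) m) c24 p = _
    rw [rho_neg_left]
  have h2 : rhoR 24 (fun m => d24 (23 - m)) c24 p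
      = rhoR 24 (fun m => c24 (23 - m)) d24 p := rho_rev_left d24 c24 p
  have h3 : rhoR 24 c24r d24 p = rhoR 24 (fun m => c24 (23 - m)) d24 p := rfl
  rw [h1, h2, h3]; ring

lemma turyn_I3 (p : ℕ) : rhoR 24 nd24r nd24r p = rhoR 24 d24 d24 p := by
  have h1 : rhoR 24 nd24r nd24r p = rhoR 24 (fun m => d24 (23 - m)) (fun m => d24 (23 - m)) p := by
    show rhoR 24 (fun m => -(fun k => d24 (23 - k)) m) (fun m => -(fun k => d24 (23 - k)) m) p = _
    rw [rho_neg_left, rho_neg_right]; ring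
  rw [h1]; exact rho_rev_rev d24 d24 p

lemma turyn_I4 (p : ℕ) : rhoR 24 c24r c24r p = rhoR 24 c24 c24 p := rho_rev_rev c24 c24 p

lemma turyn_I5 (p : ℕ) : rhoR 24 nd24r c24r p + rhoR 24 c24r nd24r p
    = -(rhoR 24 c24 d24 p + rhoR 24 d24 c24 p) := by
  have h1 : rhoR 24 nd24r c24r p = -rhoR 24 (fun m => d24 (23 - m)) c24r p := by
    show rhoR 24 (fun m => -(fun k => d24 (23 - k)) m) c24r p = _
    rw [rho_neg_left]
  have h2 : rhoR 24 c24r nd24r p = -rhoR 24 c24r (fun m => d24 (23 - m)) p := by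
    show rhoR 24 c24r (fun m => -(fun k => d24 (23 - k)) m) p = _
    rw [rho_neg_right]
  have h3 : rhoR 24 (fun m => d24 (23 - m)) c24r p = rhoR 24 c24 d24 p :=
    rho_rev_rev d24 c24 p
  have h4 : rhoR 24 c24r (fun m => d24 (23 - m)) p = rhoR 24 d24 c24 p :=
    rho_rev_rev c24 d24 p
  rw [h1, h2, h3, h4]; ring

lemma rho_big (x y : ℕ → ℝ) (p : ℕ) (h : 24 ≤ p) : rhoR 24 x y p = 0 := by
  simp [rhoR, Nat.sub_eq_zero_of_le h]

set_option maxRecDepth 10000 in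
lemma turyn_N1 (p : ℕ) (h : (1 ≤ p ∧ p ≤ 11) ∨ 13 ≤ p) :
    rhoR 24 c24 c24 p + rhoR 24 d24 d24 p = 0 := by
  by_cases h24 : 24 ≤ p
  · rw [rho_big _ _ _ h24, rho_big _ _ _ h24]; ring
  · push_neg at h24
    interval_cases p <;>
      first
      | (exfalso; omega)
      | norm_num only [rhoR, Finset.sum_range_succ, Finset.sum_range_zero, c24, d24,
          List.getD_cons_succ, List.getD_cons_zero]

set_option maxRecDepth 10000 in
lemma turyn_N2 (p : ℕ) (h : 13 ≤ p) :
    rhoR 24 c24 d24 p + rhoR 24 d24 c24 p = 0 := by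
  by_cases h24 : 24 ≤ p
  · rw [rho_big _ _ _ h24, rho_big _ _ _ h24]; ring
  · push_neg at h24
    interval_cases p <;>
      norm_num only [rhoR, Finset.sum_range_succ, Finset.sum_range_zero, c24, d24,
        List.getD_cons_succ, List.getD_cons_zero]

set_option maxRecDepth 10000 in
lemma turyn_N3 (p : ℕ) (h : 13 ≤ p) :
    rhoR 24 c24 c24r p + rhoR 24 d24 nd24r p = 0 := by
  by_cases h24 : 24 ≤ p
  · rw [rho_big _ _ _ h24, rho_big _ _ _ h24]; ring
  · push_neg at h24
    interval_cases p <;>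
      norm_num only [rhoR, Finset.sum_range_succ, Finset.sum_range_zero, c24, d24, c24r, nd24r,
        List.getD_cons_succ, List.getD_cons_zero]

set_option maxRecDepth 10000 in
lemma turyn_N4 (p : ℕ) (h : 13 ≤ p) :
    rhoR 24 nd24r d24 p + rhoR 24 c24r c24 p = 0 := by
  by_cases h24 : 24 ≤ p
  · rw [rho_big _ _ _ h24, rho_big _ _ _ h24]; ring
  · push_neg at h24
    interval_cases p <;>
      norm_num only [rhoR, Finset.sum_range_succ, Finset.sum_range_zero, c24, d24, c24r, nd24r,
        List.getD_cons_succ, List.getD_cons_zero]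

lemma c24_pm (m : ℕ) (hm : m ≤ 23) : c24 m = 1 ∨ c24 m = -1 := by
  interval_cases m <;> norm_num [c24]

lemma d24_pm (m : ℕ) (hm : m ≤ 23) : d24 m = 1 ∨ d24 m = -1 := by
  interval_cases m <;> norm_num [d24]

end TurynAux

/-- If `(a, b)` is a binary GCP of length `M`, then the Turyn product of
`(a, b)` with the optimal `(24, 11)`-CZCP `(c24, d24)` — i.e. the length-`24M` sequences
`e, f` given at index `mM + j` by `e_{mM+j} = c_m (a_j + b_j)/2 - d_{23-m} (b_j - a_j)/2`
and `f_{mM+j} = d_m (a_j + b_j)/2 + c_{23-m} (b_j - a_j)/2` — is a binary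
`(24M, 11M)`-CZCP. -/
theorem stmt_17 (M : ℕ) (hM : 0 < M) (a b : ℕ → ℝ) (hab : IsGCP M a b)
    (e f : ℕ → ℝ)
    (he : ∀ i, e i = c24 (i / M) * (a (i % M) + b (i % M)) / 2
      - d24 (23 - i / M) * (b (i % M) - a (i % M)) / 2)
    (hf : ∀ i, f i = d24 (i / M) * (a (i % M) + b (i % M)) / 2
      + c24 (23 - i / M) * (b (i % M) - a (i % M)) / 2) :
    IsBinary (24 * M) e ∧ IsBinary (24 * M) f ∧ IsCZCPR (24 * M) (11 * M) e f := by
  obtain ⟨ha, hb, hGolay⟩ := hab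
  -- binaryness
  have hbin : IsBinary (24 * M) e ∧ IsBinary (24 * M) f := by
    constructor <;> intro i hi <;>
    · have hj : i % M < M := Nat.mod_lt _ hM
      have hdiv : i / M < 24 := (Nat.div_lt_iff_lt_mul hM).mpr (by omega)
      rcases ha _ hj with h1|h1 <;> rcases hb _ hj with h2|h2 <;>
        rcases c24_pm (i / M) (by omega) with h3|h3 <;>
        rcases d24_pm (23 - i / M) (Nat.sub_le 23 _) with h4|h4 <;>
        rcases c24_pm (23 - i / M) (Nat.sub_le 23 _) with h5|h5 <;>
        rcases d24_pm (i / M) (by omega) with h6|h6 <;>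
        first
        | (rw [he i, h1, h2, h3, h4]; norm_num)
        | (rw [hf i, h1, h2, h5, h6]; norm_num)
  refine ⟨hbin.1, hbin.2, ?_, ?_⟩ <;>
    [skip; skip]
  all_goals
    have he' : ∀ i, e i = c24 (i / M) * ((fun j => (a j + b j) / 2) (i % M))
        + nd24r (i / M) * ((fun j => (b j - a j) / 2) (i % M)) := by
      intro i
      rw [he i]
      show _ = c24 (i / M) * ((a (i % M) + b (i % M)) / 2)
        + (-d24 (23 - i / M)) * ((b (i % M) - a (i % M)) / 2)
      ring
    have hf' : ∀ i, f i = d24 (i / M) * ((fun j => (a j + b j) / 2) (i % M))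
        + c24r (i / M) * ((fun j => (b j - a j) / 2) (i % M)) := by
      intro i
      rw [hf i]
      show _ = d24 (i / M) * ((a (i % M) + b (i % M)) / 2)
        + (c24 (23 - i / M)) * ((b (i % M) - a (i % M)) / 2)
      ring
    have hAgen : ∀ q' : ℕ, rhoR M (fun j => (a j + b j) / 2) (fun j => (a j + b j) / 2) q'
        + rhoR M (fun j => (b j - a j) / 2) (fun j => (b j - a j) / 2) q'
        = (rhoR M a a q' + rhoR M b b q') / 2 := by
      intro q'
      simp only [rhoR]
      rw [← Finset.sum_add_distrib, ← Finset.sum_add_distrib, Finset.sum_div]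
      exact Finset.sum_congr rfl fun k _ => by ring
    have hA1 : ∀ q' : ℕ, 1 ≤ q' → rhoR M (fun j => (a j + b j) / 2) (fun j => (a j + b j) / 2) q'
        + rhoR M (fun j => (b j - a j) / 2) (fun j => (b j - a j) / 2) q' = 0 := by
      intro q' h1
      by_cases h2 : M ≤ q'
      · have z1 : M - q' = 0 := by omega
        simp [rhoR, z1]
      · rw [hAgen q', hGolay q' h1 (by omega)]
        norm_num
  -- C1
  · intro τ hτ
    have hτ24 : τ ≤ 24 * M - 1 := by rcases hτ with ⟨h1, h2⟩ | ⟨h1, h2⟩ <;> omega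
    obtain ⟨p, q, hq, hτeq, hp23⟩ : ∃ p q, q < M ∧ p * M + q = τ ∧ p ≤ 23 :=
      ⟨τ / M, τ % M, Nat.mod_lt _ hM, by rw [Nat.mul_comm]; exact Nat.div_add_mod τ M, by
        have : τ / M < 24 := (Nat.div_lt_iff_lt_mul hM).mpr (by omega); omega⟩
    rw [← hτeq,
      rho_split M hM c24 nd24r c24 nd24r (fun j => (a j + b j) / 2) (fun j => (b j - a j) / 2) e e he' he' p q hp23 hq,
      rho_split M hM d24 c24r d24 c24r (fun j => (a j + b j) / 2) (fun j => (b j - a j) / 2) f f hf' hf' p q hp23 hq]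
    rcases Nat.eq_zero_or_pos q with hq0 | hq0
    · subst hq0
      have hp1 : (1 ≤ p ∧ p ≤ 11) ∨ 13 ≤ p := by
        rcases hτ with ⟨h1, h2⟩ | ⟨h1, h2⟩
        · left
          constructor
          · rcases Nat.eq_zero_or_pos p with h0 | h0
            · exfalso; rw [h0] at hτeq; simp at hτeq; omega
            · exact h0
          · have hle : p * M ≤ 11 * M := by omega
            exact le_of_mul_le_mul_right hle hM
        · right
          have h13 : 13 * M ≤ p * M := by omega
          exact le_of_mul_le_mul_right h13 hM
      have n1 := turyn_N1 p hp1
      have hz : ∀ x y : ℕ → ℝ, rhoR M x y (M - 0) = 0 := fun x y => by simp [rhoR]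
      linear_combination (rhoR M (fun j => (a j + b j) / 2) (fun j => (b j - a j) / 2) 0) * turyn_I1 p
        + (rhoR M (fun j => (b j - a j) / 2) (fun j => (a j + b j) / 2) 0) * turyn_I2 p
        + (rhoR M (fun j => (b j - a j) / 2) (fun j => (b j - a j) / 2) 0) * turyn_I3 p
        + (rhoR M (fun j => (b j - a j) / 2) (fun j => (b j - a j) / 2) 0) * turyn_I4 p
        + (rhoR M (fun j => (a j + b j) / 2) (fun j => (a j + b j) / 2) 0
            + rhoR M (fun j => (b j - a j) / 2) (fun j => (b j - a j) / 2) 0) * n1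
        + (rhoR 24 c24 c24 (p+1)) * hz (fun j => (a j + b j) / 2) (fun j => (a j + b j) / 2)
        + (rhoR 24 c24 nd24r (p+1)) * hz (fun j => (b j - a j) / 2) (fun j => (a j + b j) / 2)
        + (rhoR 24 nd24r c24 (p+1)) * hz (fun j => (a j + b j) / 2) (fun j => (b j - a j) / 2)
        + (rhoR 24 nd24r nd24r (p+1)) * hz (fun j => (b j - a j) / 2) (fun j => (b j - a j) / 2)
        + (rhoR 24 d24 d24 (p+1)) * hz (fun j => (a j + b j) / 2) (fun j => (a j + b j) / 2)
        + (rhoR 24 d24 c24r (p+1)) * hz (fun j => (b j - a j) / 2) (fun j => (a j + b j) / 2)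
        + (rhoR 24 c24r d24 (p+1)) * hz (fun j => (a j + b j) / 2) (fun j => (b j - a j) / 2)
        + (rhoR 24 c24r c24r (p+1)) * hz (fun j => (b j - a j) / 2) (fun j => (b j - a j) / 2)
    · have hAq := hA1 q hq0
      have hAMq := hA1 (M - q) (by omega)
      linear_combination (rhoR M (fun j => (a j + b j) / 2) (fun j => (b j - a j) / 2) q) * turyn_I1 p
        + (rhoR M (fun j => (b j - a j) / 2) (fun j => (a j + b j) / 2) q) * turyn_I2 p
        + (rhoR M (fun j => (b j - a j) / 2) (fun j => (a j + b j) / 2) (M - q)) * turyn_I1 (p+1)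
        + (rhoR M (fun j => (a j + b j) / 2) (fun j => (b j - a j) / 2) (M - q)) * turyn_I2 (p+1)
        + (rhoR M (fun j => (b j - a j) / 2) (fun j => (b j - a j) / 2) q) * turyn_I3 p
        + (rhoR M (fun j => (b j - a j) / 2) (fun j => (b j - a j) / 2) q) * turyn_I4 p
        + (rhoR M (fun j => (b j - a j) / 2) (fun j => (b j - a j) / 2) (M - q)) * turyn_I3 (p+1)
        + (rhoR M (fun j => (b j - a j) / 2) (fun j => (b j - a j) / 2) (M - q)) * turyn_I4 (p+1)
        + (rhoR 24 c24 c24 p + rhoR 24 d24 d24 p) * hAq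
        + (rhoR 24 c24 c24 (p+1) + rhoR 24 d24 d24 (p+1)) * hAMq
  -- C2
  · intro τ ⟨h1, h2⟩
    obtain ⟨p, q, hq, hτeq, hp23⟩ : ∃ p q, q < M ∧ p * M + q = τ ∧ p ≤ 23 :=
      ⟨τ / M, τ % M, Nat.mod_lt _ hM, by rw [Nat.mul_comm]; exact Nat.div_add_mod τ M, by
        have : τ / M < 24 := (Nat.div_lt_iff_lt_mul hM).mpr (by omega); omega⟩
    have hp13 : 13 ≤ p := by
      have h13 : 13 * M ≤ τ := by omega
      have hlt : 13 * M < (p + 1) * M := by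
        calc 13 * M ≤ τ := h13
          _ = p * M + q := hτeq.symm
          _ < p * M + M := by omega
          _ = (p + 1) * M := by ring
      have := lt_of_mul_lt_mul_right hlt (Nat.zero_le M)
      omega
    rw [← hτeq,
      rho_split M hM c24 nd24r d24 c24r (fun j => (a j + b j) / 2) (fun j => (b j - a j) / 2) e f he' hf' p q hp23 hq,
      rho_split M hM d24 c24r c24 nd24r (fun j => (a j + b j) / 2) (fun j => (b j - a j) / 2) f e hf' he' p q hp23 hq]
    have n2 := turyn_N2 p hp13
    have n2' := turyn_N2 (p+1) (by omega)
    have n3 := turyn_N3 p hp13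
    have n3' := turyn_N3 (p+1) (by omega)
    have n4 := turyn_N4 p hp13
    have n4' := turyn_N4 (p+1) (by omega)
    linear_combination (rhoR M (fun j => (a j + b j) / 2) (fun j => (a j + b j) / 2) q) * n2
      + (rhoR M (fun j => (a j + b j) / 2) (fun j => (a j + b j) / 2) (M - q)) * n2'
      + (rhoR M (fun j => (a j + b j) / 2) (fun j => (b j - a j) / 2) q) * n3
      + (rhoR M (fun j => (b j - a j) / 2) (fun j => (a j + b j) / 2) (M - q)) * n3'
      + (rhoR M (fun j => (b j - a j) / 2) (fun j => (a j + b j) / 2) q) * n4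
      + (rhoR M (fun j => (a j + b j) / 2) (fun j => (b j - a j) / 2) (M - q)) * n4'
      + (rhoR M (fun j => (b j - a j) / 2) (fun j => (b j - a j) / 2) q) * turyn_I5 p
      + (rhoR M (fun j => (b j - a j) / 2) (fun j => (b j - a j) / 2) (M - q)) * turyn_I5 (p+1)
      - (rhoR M (fun j => (b j - a j) / 2) (fun j => (b j - a j) / 2) q) * n2
      - (rhoR M (fun j => (b j - a j) / 2) (fun j => (b j - a j) / 2) (M - q)) * n2'
end
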